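/- arXiv:2006.10295 — 6 statements merged into one kernel-verified Lean document; each statement's English description precedes it below -/
import Mathlib

section
/- Let p be a prime and G̃ a finite p-group that is non-cyclic and not isomorphic to any generalized quaternion group. Let Z be a subgroup of order p contained in the center of G̃. Then the quotient map π : G̃ → G̃/Z is a forcing extension. -/
/-- A surjective group homomorphism `π : G̃ → G` is a forcing extension if there is a conjugacy
class `C` of `G` such that for every `c ∈ C`, every preimage of `c` has the same order as `c`. -/
def IsForcingExtension {G₁ G₂ : Type*} [Group G₁] [Group G₂] (π : G₁ →* G₂) : Prop :=
  Function.Surjective π ∧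
    ∃ c₀ : G₂, ∀ c : G₂, IsConj c₀ c → ∀ g : G₁, π g = c → orderOf g = orderOf c

/-- A subgroup contained in the center is normal. -/
lemma normal_of_le_center {G : Type*} [Group G] {Z : Subgroup G}
    (h : Z ≤ Subgroup.center G) : Z.Normal := by
  constructor
  intro z hz g
  have hc := (Subgroup.mem_center_iff.mp (h hz)) g
  simpa [hc, mul_assoc] using hz

open Subgroup


lemma NT_fermat (p : ℕ) (hp : p.Prime) {s : ℤ} (h : (p:ℤ) ∣ s ^ p - 1) : (p:ℤ) ∣ s - 1 := by
  haveI : Fact p.Prime := ⟨hp⟩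
  have h2 : (p : ℤ) ∣ s ^ p - s := by
    rw [← ZMod.intCast_zmod_eq_zero_iff_dvd]
    push_cast
    rw [ZMod.pow_card]
    ring
  have h3 := h.sub h2
  simpa using h3

lemma NT_odd (p : ℕ) (hp : p.Prime) (hodd : p ≠ 2) (n : ℕ) (hn : 2 ≤ n) (s c : ℤ)
    (hs : ((p : ℤ))^n ∣ s ^ p - 1) (hc : (p : ℤ) ∣ c) :
    ∃ a : ℤ, ((p : ℤ))^n ∣ a * (∑ i ∈ Finset.range p, s ^ i) + c := by
  have hp1 : (p : ℤ) ∣ s - 1 :=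
    NT_fermat p hp (dvd_trans (dvd_pow_self _ (by omega)) hs)
  obtain ⟨t, ht⟩ : ∃ t, s = 1 + p * t := ⟨(s-1)/p, by rw [Int.mul_ediv_cancel' hp1]; ring⟩
  have key : ∀ i : ℕ, ∃ e : ℤ, s ^ i = 1 + i * p * t + p^2 * e := by
    intro i
    induction i with
    | zero => exact ⟨0, by simp⟩
    | succ i ih =>
      obtain ⟨e, he⟩ := ih
      refine ⟨e * s + i * t^2, ?_⟩
      rw [pow_succ, he, ht]
      push_cast
      ring
  have sum : ∀ k : ℕ, ∃ E : ℤ, (∑ i ∈ Finset.range k, s ^ i)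
      = k + (∑ i ∈ Finset.range k, (i:ℤ)) * p * t + p^2 * E := by
    intro k
    induction k with
    | zero => exact ⟨0, by simp⟩
    | succ k ih =>
      obtain ⟨E, hE⟩ := ih
      obtain ⟨e, he⟩ := key k
      refine ⟨E + e, ?_⟩
      rw [Finset.sum_range_succ, Finset.sum_range_succ, hE, he]
      push_cast
      ring
  obtain ⟨E, hE⟩ := sum p
  have hgauss : (2:ℤ) * (∑ i ∈ Finset.range p, (i:ℤ)) = p * (p - 1) := by
    have h2 : ((∑ i ∈ Finset.range p, i) * 2 : ℕ) = (p * (p-1) : ℕ) :=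
      Finset.sum_range_id_mul_two p
    have h3 := congrArg (fun x : ℕ => (x : ℤ)) h2
    push_cast [Nat.cast_sub (Nat.one_le_iff_ne_zero.mpr hp.ne_zero)] at h3
    linarith
  have hpS : (p:ℤ) ∣ (∑ i ∈ Finset.range p, (i:ℤ)) := by
    have hpdvd : (p:ℤ) ∣ 2 * (∑ i ∈ Finset.range p, (i:ℤ)) := by
      rw [hgauss]; exact Dvd.intro _ rfl
    have hprime : Prime (p:ℤ) := Nat.prime_iff_prime_int.mp hp
    rcases hprime.dvd_mul.mp hpdvd with h | h
    · exfalso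
      have hnd : p ∣ 2 := Int.ofNat_dvd.mp (by exact_mod_cast h)
      exact hodd ((Nat.prime_dvd_prime_iff_eq hp Nat.prime_two).mp hnd)
    · exact h
  obtain ⟨S', hS'⟩ := hpS
  have hσ : (∑ i ∈ Finset.range p, s ^ i) = p * (1 + p * (S' * t + E)) := by
    rw [hE, hS']
    ring
  set d : ℤ := S' * t + E with hd
  have hu0 : IsCoprime ((p:ℤ)) (1 + p * d) := ⟨-d, 1, by ring⟩
  have hu : IsCoprime ((p:ℤ)^(n-1)) (1 + p * d) := hu0.pow_left
  obtain ⟨v, w, hvw⟩ := hu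
  obtain ⟨c', hc'⟩ := hc
  refine ⟨-(w * c'), ?_⟩
  rw [hσ, hc']
  have hform : -(w * c') * ((p:ℤ) * (1 + p * d)) + p * c'
      = (p:ℤ) * (c' * (1 - w * (1 + p * d))) := by ring
  rw [hform]
  have h1 : (1 : ℤ) - w * (1 + p * d) = v * (p:ℤ)^(n-1) := by linarith [hvw]
  rw [h1]
  have h2 : (p:ℤ) * (c' * (v * (p:ℤ)^(n-1))) = (p:ℤ)^n * (c' * v) := by
    rw [show (p:ℤ)^n = (p:ℤ)^(n-1) * p from by rw [← pow_succ]; congr 1; omega]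
    ring
  rw [h2]
  exact Dvd.intro _ rfl

lemma NT_two (n : ℕ) (hn : 2 ≤ n) (s c : ℤ) (hs : (2:ℤ)^n ∣ s^2 - 1)
    (hcs : (2:ℤ)^n ∣ c * (s-1)) (hc : (2:ℤ) ∣ c) :
    (∃ a : ℤ, (2:ℤ)^n ∣ a * (1 + s) + c) ∨ ((2:ℤ)^n ∣ s + 1 ∧ (2:ℤ)^n ∣ c - 2^(n-1)) := by
  have h2n : (2:ℤ) * 2^(n-1) = 2^n := by
    rw [show (2:ℤ)^n = (2:ℤ)^(n-1) * 2 from by rw [← pow_succ]; congr 1; omega]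
    ring
  have hsodd : Odd s := by
    rcases Int.even_or_odd s with he | ho
    · exfalso
      have h2 : (2:ℤ) ∣ s^2 - 1 := dvd_trans (dvd_pow_self 2 (by omega : n ≠ 0)) hs
      obtain ⟨k, hk⟩ := he
      obtain ⟨m, hm⟩ := h2
      obtain ⟨r, hr⟩ : ∃ r, s^2 = 2*r := ⟨k*s, by rw [hk]; ring⟩
      omega
    · exact ho
  obtain ⟨k, hk⟩ := hsodd
  obtain ⟨c', hc'⟩ := hc
  rcases Int.even_or_odd k with ⟨j, hj⟩ | ⟨j, hj⟩
  · -- s ≡ 1 mod 4 : case A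
    left
    have hu0 : IsCoprime ((2:ℤ)) (1 + 2*j) := ⟨-j, 1, by ring⟩
    have hu : IsCoprime ((2:ℤ)^(n-1)) (1 + 2*j) := hu0.pow_left
    obtain ⟨v, w, hvw⟩ := hu
    refine ⟨-(w * c'), ?_⟩
    have hform : -(w * c') * (1 + s) + c = 2 * (c' * (1 - w * (1 + 2*j))) := by
      rw [hk, hj, hc']; ring
    rw [hform]
    have h1 : (1 : ℤ) - w * (1 + 2*j) = v * 2^(n-1) := by linarith [hvw]
    rw [h1]
    refine ⟨c' * v, ?_⟩
    rw [← h2n]; ring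
  · -- s ≡ 3 mod 4 : case B
    have hg : s - 1 = 2 * (2*j+1) := by omega
    have hgodd0 : IsCoprime ((2:ℤ)) (2*j+1) := ⟨-j, 1, by ring⟩
    have hgodd : IsCoprime ((2:ℤ)^(n-1)) (2*j+1) := hgodd0.pow_left
    have hcc : (2:ℤ)^(n-1) ∣ c := by
      have h1 : (2:ℤ)^n ∣ 2 * (c * (2*j+1)) := by
        rw [show (2:ℤ) * (c * (2*j+1)) = c * (s - 1) by rw [hg]; ring]
        exact hcs
      rw [← h2n] at h1
      exact hgodd.dvd_of_dvd_mul_right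
        ((mul_dvd_mul_iff_left (by norm_num : (2:ℤ) ≠ 0)).mp h1)
    have hss : (2:ℤ)^(n-1) ∣ s + 1 := by
      have h1 : (2:ℤ)^n ∣ 2 * ((2*j+1) * (s+1)) := by
        have hh : (2:ℤ) * ((2*j+1) * (s+1)) = s^2 - 1 := by
          have hsval : s = 4*j + 3 := by omega
          rw [hsval]; ring
        rw [hh]
        exact hs
      rw [← h2n] at h1
      exact hgodd.dvd_of_dvd_mul_left
        ((mul_dvd_mul_iff_left (by norm_num : (2:ℤ) ≠ 0)).mp h1)
    obtain ⟨f, hf⟩ := hcc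
    obtain ⟨e, he⟩ := hss
    rcases Int.even_or_odd e with ⟨e', he'⟩ | ⟨e', he'⟩
    · rcases Int.even_or_odd f with ⟨f', hf'⟩ | ⟨f', hf'⟩
      · left
        refine ⟨0, ⟨f', ?_⟩⟩
        rw [zero_mul, zero_add, hf, hf', ← h2n]; ring
      · right
        constructor
        · refine ⟨e', ?_⟩
          rw [he, he', ← h2n]; ring
        · refine ⟨f', ?_⟩
          rw [hf, hf', ← h2n]; ring
    · left
      refine ⟨f, ⟨f * (e' + 1), ?_⟩⟩
      rw [show (1:ℤ) + s = s + 1 by ring, he, he', hf, ← h2n]; ring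



lemma iso_quaternion {G : Type*} [Group G] (q : ℕ) (hq : 0 < q) (x y : G)
    (hx : orderOf x = 2 * q) (hxy : y ∉ zpowers x)
    (hy2 : y ^ 2 = x ^ (q : ℕ)) (hconj : y * x * y⁻¹ = x⁻¹)
    (hcover : ∀ g : G, g ∈ zpowers x ∨ ∃ k : ℤ, g = x ^ k * y) :
    Nonempty (G ≃* QuaternionGroup q) := by
  haveI : NeZero (2 * q) := ⟨by omega⟩
  set m : ℕ := 2 * q with hm
  -- conjugation facts
  have hyx : ∀ k : ℤ, y * x ^ k * y⁻¹ = x ^ (-k) := by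
    intro k
    rw [← conj_zpow, hconj, inv_zpow, ← zpow_neg]
  have hxy2 : ∀ k : ℤ, x ^ k * y = y * x ^ (-k) := by
    intro k
    have h := hyx (-k)
    rw [neg_neg] at h
    rw [← h]
    group
  -- congruence tool
  have hv : ∀ u : ZMod m, (((u.val : ℤ)) : ZMod m) = u := by
    intro u
    push_cast
    simp [ZMod.natCast_val, ZMod.cast_id]
  have hpow : ∀ (u : ZMod m) (k : ℤ), ((k : ZMod m) = u) → x ^ k = x ^ (u.val : ℤ) := by
    intro u k hku
    rw [zpow_eq_zpow_iff_modEq, hx]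
    exact (ZMod.intCast_eq_intCast_iff _ _ _).mp (by rw [hku, hv])
  -- the homomorphism
  let f : QuaternionGroup q → G := fun g =>
    match g with
    | QuaternionGroup.a i => x ^ (i.val : ℤ)
    | QuaternionGroup.xa i => y * x ^ (i.val : ℤ)
  have hmul : ∀ g₁ g₂ : QuaternionGroup q, f (g₁ * g₂) = f g₁ * f g₂ := by
    rintro (i | i) (j | j)
    · show x ^ (((i + j).val : ℤ)) = x ^ (i.val : ℤ) * x ^ (j.val : ℤ)
      rw [← zpow_add]
      rw [(hpow (i+j) ((i.val : ℤ) + (j.val : ℤ)) (by push_cast [hv]; rfl)).symm]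
    · show y * x ^ (((j - i).val : ℤ)) = x ^ (i.val : ℤ) * (y * x ^ (j.val : ℤ))
      rw [← mul_assoc, hxy2, mul_assoc, ← zpow_add]
      congr 1
      rw [(hpow (j - i) (-(i.val : ℤ) + (j.val : ℤ)) (by push_cast [hv]; ring)).symm]
    · show y * x ^ (((i + j).val : ℤ)) = y * x ^ (i.val : ℤ) * x ^ (j.val : ℤ)
      rw [mul_assoc, ← zpow_add]
      congr 1
      rw [(hpow (i+j) ((i.val : ℤ) + (j.val : ℤ)) (by push_cast [hv]; rfl)).symm]
    · show x ^ ((((q : ZMod m) + j - i).val : ℤ)) = (y * x ^ (i.val : ℤ)) * (y * x ^ (j.val : ℤ))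
      have : (y * x ^ (i.val : ℤ)) * (y * x ^ (j.val : ℤ))
          = y ^ 2 * (x ^ (-(i.val:ℤ)) * x ^ (j.val : ℤ)) := by
        rw [mul_assoc y, ← mul_assoc (x ^ (i.val:ℤ)), hxy2, pow_two]
        group
      rw [this, hy2, ← zpow_natCast x q, ← zpow_add, ← zpow_add]
      rw [(hpow ((q : ZMod m) + j - i) ((q:ℤ) + (-(i.val:ℤ) + (j.val:ℤ)))
        (by push_cast [hv]; ring)).symm]
  let φ : QuaternionGroup q →* G := MonoidHom.mk' f hmul
  have hinj : Function.Injective φ := by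
    rw [injective_iff_map_eq_one]
    rintro (i | i) hgi
    · have hgi' : x ^ (i.val : ℤ) = 1 := hgi
      rw [zpow_natCast] at hgi'
      have hdvd : orderOf x ∣ i.val := orderOf_dvd_of_pow_eq_one hgi'
      rw [hx] at hdvd
      rcases Nat.eq_zero_or_pos i.val with h0 | hpos
      · have hi0 : i = 0 := by
          have := (ZMod.val_eq_zero i).mp h0
          exact this
        rw [hi0]
        rfl
      · exfalso
        have := Nat.le_of_dvd hpos hdvd
        have := ZMod.val_lt i
        omega
    · exfalso
      apply hxy
      have hgi' : y * x ^ (i.val : ℤ) = 1 := hgi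
      have : y = (x ^ (i.val : ℤ))⁻¹ := by
        rw [eq_inv_iff_mul_eq_one]
        exact hgi'
      rw [this]
      exact inv_mem (zpow_mem (mem_zpowers x) _)
  have hsurj : Function.Surjective φ := by
    intro g
    rcases hcover g with hg | ⟨k, hk⟩
    · obtain ⟨k, hk⟩ := mem_zpowers_iff.mp hg
      refine ⟨QuaternionGroup.a ((k : ZMod m)), ?_⟩
      show x ^ ((((k : ZMod m)).val : ℤ)) = g
      rw [← hpow _ k rfl, hk]
    · refine ⟨QuaternionGroup.xa (((-k : ℤ) : ZMod m)), ?_⟩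
      show y * x ^ (((((-k : ℤ) : ZMod m)).val : ℤ)) = g
      rw [← hpow _ (-k) rfl, hk, hxy2]
  exact ⟨(MulEquiv.ofBijective φ ⟨hinj, hsurj⟩).symm⟩



lemma master {G : Type*} [Group G] {p n : ℕ} (hp : p.Prime) (hn : 2 ≤ n) (x w : G)
    (hx : orderOf x = p ^ n)
    (hw_dvd : orderOf w ∣ p ^ n)
    (hwnx : w ∉ zpowers x) (hwp : w ^ p ∈ zpowers x)
    (hwxw : w * x * w⁻¹ ∈ zpowers x)
    (hord : ∀ g : G, orderOf g = p → g ∈ zpowers x) :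
    p = 2 ∧ w * x * w⁻¹ = x⁻¹ ∧ w ^ 2 = x ^ (2 ^ (n - 1) : ℕ) := by
  obtain ⟨s, hs⟩ := mem_zpowers_iff.mp hwxw
  obtain ⟨c, hc⟩ := mem_zpowers_iff.mp hwp
  have hxord : ((orderOf x : ℤ)) = (p:ℤ)^n := by rw [hx]; push_cast; ring
  have hzpow_eq : ∀ a b : ℤ, (p:ℤ)^n ∣ b - a → x ^ a = x ^ b := by
    intro a b hab
    rw [zpow_eq_zpow_iff_modEq]
    have : a ≡ b [ZMOD ((orderOf x : ℤ))] := by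
      rw [hxord]
      exact (Int.modEq_iff_dvd.mpr hab)
    exact this
  have hzpow_dvd : ∀ a b : ℤ, x ^ a = x ^ b → (p:ℤ)^n ∣ b - a := by
    intro a b hab
    have := zpow_eq_zpow_iff_modEq.mp hab
    rw [hxord] at this
    exact Int.ModEq.dvd this
  have conj1 : ∀ k : ℤ, w * x ^ k * w⁻¹ = x ^ (s * k) := by
    intro k
    rw [← conj_zpow, ← hs, ← zpow_mul]
  have conj2 : ∀ (j : ℕ) (k : ℤ), w ^ j * x ^ k * (w ^ j)⁻¹ = x ^ (s ^ j * k) := by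
    intro j
    induction j with
    | zero => intro k; simp
    | succ j ih =>
      intro k
      have step : w ^ (j+1) * x ^ k * (w ^ (j+1))⁻¹
          = w * (w ^ j * x ^ k * (w ^ j)⁻¹) * w⁻¹ := by
        rw [pow_succ' w j, mul_inv_rev]
        group
      rw [step, ih, conj1]
      congr 1
      ring
  -- (p:ℤ)^n ∣ s^p - 1
  have hsp : (p:ℤ)^n ∣ s ^ p - 1 := by
    have e1 : x ^ ((1:ℤ)) = x ^ (s ^ p * 1) := by
      rw [← conj2 p 1, ← hc]
      group
    have := hzpow_dvd _ _ e1
    simpa using this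
  -- (p:ℤ)^n ∣ c * (s - 1)
  have hcs : (p:ℤ)^n ∣ c * (s - 1) := by
    have e1 : x ^ (s * c) = x ^ (c : ℤ) := by
      rw [← conj1 c, hc]
      group
    have hd := hzpow_dvd _ _ e1
    rw [show c - s * c = -(c * (s - 1)) from by ring] at hd
    exact dvd_neg.mp hd
  -- (p:ℤ) ∣ c
  have hpc : (p:ℤ) ∣ c := by
    have hw1 : w ^ (p ^ n) = 1 := orderOf_dvd_iff_pow_eq_one.mp hw_dvd
    have hpn : p * p ^ (n-1) = p ^ n := by
      rw [← pow_succ']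
      congr 1
      omega
    have e1 : x ^ (c * ((p:ℤ)^(n-1))) = 1 := by
      have h2 : (x ^ (c:ℤ)) ^ ((p^(n-1) : ℕ)) = 1 := by
        rw [hc, ← pow_mul, hpn, hw1]
      rw [← zpow_natCast, ← zpow_mul] at h2
      rw [show (c * ((p:ℤ)^(n-1))) = c * ((p^(n-1):ℕ) : ℤ) from by push_cast; ring]
      exact h2
    have hdvd : ((orderOf x : ℤ)) ∣ c * ((p:ℤ)^(n-1)) := orderOf_dvd_iff_zpow_eq_one.mpr e1
    rw [hxord] at hdvd
    obtain ⟨d, hd⟩ := hdvd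
    refine ⟨d, ?_⟩
    have hcancel : (p:ℤ)^(n-1) * c = (p:ℤ)^(n-1) * ((p:ℤ) * d) := by
      rw [show (p:ℤ)^n = (p:ℤ)^(n-1) * p from by rw [← pow_succ]; congr 1; omega] at hd
      linarith [hd]
    have hne : ((p:ℤ))^(n-1) ≠ 0 := pow_ne_zero _ (by exact_mod_cast hp.ne_zero)
    exact mul_left_cancel₀ hne hcancel
  -- product formula
  have f7 : ∀ (a : ℤ) (j : ℕ), (x ^ a * w) ^ j
      = x ^ (a * ∑ i ∈ Finset.range j, s ^ i) * w ^ j := by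
    intro a j
    induction j with
    | zero => simp
    | succ j ih =>
      rw [pow_succ, ih]
      have hswap : w ^ j * x ^ a = x ^ (s ^ j * a) * w ^ j := by
        have := conj2 j a
        rw [← this]
        group
      calc x ^ (a * ∑ i ∈ Finset.range j, s ^ i) * w ^ j * (x ^ a * w)
          = x ^ (a * ∑ i ∈ Finset.range j, s ^ i) * (w ^ j * x ^ a) * w := by group
        _ = x ^ (a * ∑ i ∈ Finset.range j, s ^ i) * (x ^ (s ^ j * a) * w ^ j) * w := by
            rw [hswap]
        _ = x ^ (a * ∑ i ∈ Finset.range (j+1), s ^ i) * w ^ (j+1) := by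
            rw [Finset.sum_range_succ]
            rw [show a * ((∑ i ∈ Finset.range j, s ^ i) + s ^ j)
              = a * (∑ i ∈ Finset.range j, s ^ i) + s ^ j * a from by ring, zpow_add]
            rw [pow_succ]
            group
  set σ : ℤ := ∑ i ∈ Finset.range p, s ^ i with hσ
  have hsolve : ∀ a : ℤ, ((p:ℤ)^n ∣ a * σ + c) → False := by
    intro a hdvd
    set z := x ^ a * w with hz
    have hzp : z ^ p = 1 := by
      rw [hz, f7 a p, ← hc, ← zpow_add]
      have : (orderOf x : ℤ) ∣ a * σ + c := by rw [hxord]; exact hdvd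
      exact orderOf_dvd_iff_zpow_eq_one.mp this
    have hznx : z ∉ zpowers x := by
      intro hmem
      apply hwnx
      have : w = x ^ (-a) * z := by rw [hz]; group
      rw [this]
      exact mul_mem (zpow_mem (mem_zpowers x) _) hmem
    have hz1 : z ≠ 1 := fun h => hznx (h ▸ one_mem _)
    have hzo : orderOf z ∣ p := orderOf_dvd_iff_pow_eq_one.mpr hzp
    rcases (Nat.dvd_prime hp).mp hzo with h1 | hpp
    · exact hz1 (orderOf_eq_one_iff.mp h1)
    · exact hznx (hord z hpp)
  by_cases hp2 : p = 2
  · subst hp2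
    have hsp' : (2:ℤ)^n ∣ s^2 - 1 := by exact_mod_cast hsp
    have hcs' : (2:ℤ)^n ∣ c * (s - 1) := by exact_mod_cast hcs
    have hpc' : (2:ℤ) ∣ c := by exact_mod_cast hpc
    have hσ2 : σ = 1 + s := by
      rw [hσ, Finset.sum_range_succ, Finset.sum_range_succ, Finset.sum_range_zero]
      ring
    rcases NT_two n hn s c hsp' hcs' hpc' with ⟨a, ha⟩ | ⟨h1, h2⟩
    · exfalso
      apply hsolve a
      rw [hσ2]
      exact_mod_cast ha
    · refine ⟨rfl, ?_, ?_⟩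
      · rw [← hs]
        have h3 : x ^ s = x ^ (-1 : ℤ) := hzpow_eq s (-1) (by
          rw [show (-1 : ℤ) - s = -(s+1) from by ring]
          exact_mod_cast dvd_neg.mpr h1)
        rw [h3, zpow_neg_one]
      · rw [show (2:ℕ) = 2 from rfl] at hc
        rw [← hc]
        have : x ^ (c : ℤ) = x ^ ((2^(n-1) : ℕ) : ℤ) := by
          apply hzpow_eq
          push_cast
          have := dvd_neg.mpr h2
          simpa using this
        rw [this, zpow_natCast]
  · obtain ⟨a, ha⟩ := NT_odd p hp hp2 n hn s c hsp hpc
    exact absurd (by rw [hσ]; exact ha) (fun hh => hsolve a hh)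





lemma aux_pow_prime {K : Type*} [Group K] {p : ℕ} (hp : p.Prime) (g : K) (k : ℕ)
    (hk : 1 ≤ k) (hg : orderOf g = p ^ k) : orderOf (g ^ (p ^ (k-1))) = p := by
  rw [orderOf_pow' g (pow_ne_zero _ hp.ne_zero), hg,
    Nat.gcd_eq_right (pow_dvd_pow _ (by omega)), Nat.pow_div (by omega) hp.pos,
    show k - (k-1) = 1 by omega, pow_one]

lemma exists_order_p_outside (p : ℕ) (hp : p.Prime)
    (G' : Type) [Group G'] [Finite G'] (hpG : IsPGroup p G') (hnc : ¬ IsCyclic G')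
    (hnq : ∀ n : ℕ, 1 ≤ n → IsEmpty (G' ≃* QuaternionGroup (2 ^ n)))
    (Z : Subgroup G') (hZcard : Nat.card Z = p) (hZcent : Z ≤ Subgroup.center G') :
    ∃ x : G', orderOf x = p ∧ x ∉ Z := by
  haveI : Fact p.Prime := ⟨hp⟩
  by_contra hcon
  push_neg at hcon
  -- `hcon : ∀ x, orderOf x = p → x ∈ Z`
  haveI : Nontrivial G' := by
    by_contra hs
    rw [not_nontrivial_iff_subsingleton] at hs
    exact hnc isCyclic_of_subsingleton
  obtain ⟨x, hxmax⟩ := Finite.exists_max (fun g : G' => orderOf g)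
  obtain ⟨n, hxn⟩ := IsPGroup.iff_orderOf.mp hpG x
  have hdvd : ∀ g : G', orderOf g ∣ p ^ n := by
    intro g
    obtain ⟨k, hk⟩ := IsPGroup.iff_orderOf.mp hpG g
    have hle : p ^ k ≤ p ^ n := by rw [← hk, ← hxn]; exact hxmax g
    have hkn : k ≤ n := (pow_le_pow_iff_right₀ hp.one_lt).mp hle
    rw [hk]
    exact pow_dvd_pow _ hkn
  have hn1 : 1 ≤ n := by
    by_contra h
    obtain ⟨g, hg1⟩ := exists_ne (1 : G')
    have : orderOf g ∣ 1 := by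
      have := hdvd g
      rwa [show n = 0 by omega, pow_zero] at this
    exact hg1 (orderOf_eq_one_iff.mp (Nat.eq_one_of_dvd_one this))
  have hn : 2 ≤ n := by
    by_contra h
    have hZtop : Z = ⊤ := by
      rw [eq_top_iff']
      intro g
      have hg : orderOf g ∣ p := by
        have := hdvd g
        rwa [show n = 1 by omega, pow_one] at this
      rcases (Nat.dvd_prime hp).mp hg with h1 | hpp
      · rw [orderOf_eq_one_iff.mp h1]; exact one_mem Z
      · exact hcon g hpp
    have : Nat.card G' = p := by
      rw [← hZcard, hZtop]
      exact (Subgroup.card_top (G := G')).symm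
    exact hnc (isCyclic_of_prime_card this)
  -- the central order-p subgroup sits inside ⟨x⟩
  set z₀ := x ^ (p ^ (n-1)) with hz₀
  have hz₀ord : orderOf z₀ = p := aux_pow_prime hp x n (by omega) hxn
  have hz₀Z : z₀ ∈ Z := hcon _ hz₀ord
  have hZle : Z ≤ zpowers x := by
    intro u hu
    have hzo : orderOf (⟨z₀, hz₀Z⟩ : Z) = p := by
      rw [Subgroup.orderOf_mk]
      exact hz₀ord
    have htop : zpowers (⟨z₀, hz₀Z⟩ : Z) = ⊤ :=
      Subgroup.eq_top_of_card_eq _ (by rw [Nat.card_zpowers, hzo, hZcard])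
    have hmem : (⟨u, hu⟩ : Z) ∈ zpowers (⟨z₀, hz₀Z⟩ : Z) := htop ▸ mem_top _
    obtain ⟨k, hk⟩ := mem_zpowers_iff.mp hmem
    have hk' : z₀ ^ k = u := by
      have := congrArg (fun a : Z => (a : G')) hk
      simpa using this
    rw [← hk', hz₀]
    exact zpow_mem (pow_mem (mem_zpowers x) _) k
  have hordx : ∀ g : G', orderOf g = p → g ∈ zpowers x := fun g hg => hZle (hcon g hg)
  have hxtop : zpowers x ≠ ⊤ := by
    intro h
    refine hnc ⟨⟨x, fun g => ?_⟩⟩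
    show g ∈ zpowers x
    rw [h]
    exact mem_top g
  haveI : Group.IsNilpotent G' := hpG.isNilpotent
  have hNC := normalizerCondition_of_isNilpotent (G := G')
  set N := Subgroup.normalizer (zpowers x : Set G') with hNdef
  have hlt : zpowers x < N := hNC _ (lt_top_iff_ne_top.mpr hxtop)
  set H := (zpowers x).subgroupOf N with hHdef
  have hF : ∀ w : G', w ∈ N → w ∉ zpowers x → w ^ p ∈ zpowers x →
      p = 2 ∧ w * x * w⁻¹ = x⁻¹ ∧ w ^ 2 = x ^ (2 ^ (n - 1) : ℕ) := by
    intro w hwN hwnx hwp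
    refine master hp hn x w hxn (hxn ▸ hdvd w) hwnx hwp ?_ hordx
    exact (Subgroup.mem_normalizer_iff.mp hwN x).mp (mem_zpowers x)
  -- find y of order p mod ⟨x⟩
  have hQp : IsPGroup p (N ⧸ H) := (hpG.to_subgroup N).to_quotient H
  have hHne : ∃ v : N, v ∉ H := by
    obtain ⟨v, hvN, hvx⟩ := SetLike.exists_of_lt hlt
    exact ⟨⟨v, hvN⟩, by rwa [hHdef, Subgroup.mem_subgroupOf]⟩
  obtain ⟨v₀, hv₀⟩ := hHne
  have hu₀ : (QuotientGroup.mk' H v₀) ≠ 1 := by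
    rw [Ne, QuotientGroup.mk'_apply, QuotientGroup.eq_one_iff]
    exact hv₀
  obtain ⟨k₀, hk₀⟩ := IsPGroup.iff_orderOf.mp hQp (QuotientGroup.mk' H v₀)
  have hk₀1 : 1 ≤ k₀ := by
    by_contra h
    rw [show k₀ = 0 by omega, pow_zero] at hk₀
    exact hu₀ (orderOf_eq_one_iff.mp hk₀)
  set ybar := (QuotientGroup.mk' H v₀) ^ (p ^ (k₀ - 1)) with hybar
  have hybar_ord : orderOf ybar = p := aux_pow_prime hp _ k₀ hk₀1 hk₀
  obtain ⟨y', hy'q⟩ := QuotientGroup.mk'_surjective H ybar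
  have hy'H : y' ∉ H := by
    intro h
    have : ybar = 1 := by rw [← hy'q, QuotientGroup.mk'_apply, QuotientGroup.eq_one_iff]; exact h
    rw [this, orderOf_one] at hybar_ord
    exact hp.one_lt.ne hybar_ord
  have hy'p : y' ^ p ∈ H := by
    rw [← QuotientGroup.eq_one_iff (y' ^ p)]
    have : QuotientGroup.mk' H (y' ^ p) = ybar ^ p := by rw [map_pow, hy'q]
    rw [← QuotientGroup.mk'_apply, this, ← hybar_ord, pow_orderOf_eq_one]
  set y : G' := (y' : G') with hy
  have hyN : y ∈ N := y'.2
  have hynx : y ∉ zpowers x := by rwa [hHdef, Subgroup.mem_subgroupOf] at hy'H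
  have hyp : y ^ p ∈ zpowers x := by
    rw [hHdef, Subgroup.mem_subgroupOf] at hy'p
    simpa using hy'p
  obtain ⟨hp2, hyxy, hysq⟩ := hF y hyN hynx hyp
  subst hp2
  -- every element of N ⧸ H has order dividing 2
  have hexp : ∀ vb : N ⧸ H, vb ^ 2 = 1 := by
    intro vb
    by_contra hv2
    obtain ⟨k, hk⟩ := IsPGroup.iff_orderOf.mp hQp vb
    have hk2 : 2 ≤ k := by
      by_contra h
      have hdd : orderOf vb ∣ 2 := by
        rw [hk]
        have h2 : (2:ℕ)^k ∣ 2^1 := pow_dvd_pow 2 (by omega)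
        simpa using h2
      exact hv2 (orderOf_dvd_iff_pow_eq_one.mp hdd)
    set wb := vb ^ (2 ^ (k - 2)) with hwb
    have hwb2 : wb ^ 2 ≠ 1 := by
      intro h
      have : orderOf vb ∣ 2 ^ (k - 2) * 2 := by
        rw [← pow_mul] at h
        exact orderOf_dvd_iff_pow_eq_one.mpr h
      rw [hk] at this
      have hle := Nat.le_of_dvd (by positivity) this
      have : (2:ℕ) ^ k = 2 ^ (k - 2) * 2 * 2 := by
        rw [mul_assoc, show (2:ℕ)*2 = 2^2 by norm_num, ← pow_add]
        congr 1
        omega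
      omega
    have hwb4 : wb ^ 4 = 1 := by
      rw [hwb, ← pow_mul, show 2 ^ (k-2) * 4 = 2 ^ k by
        rw [show (4:ℕ) = 2^2 by norm_num, ← pow_add]; congr 1; omega, ← hk]
      exact pow_orderOf_eq_one vb
    obtain ⟨v', hv'⟩ := QuotientGroup.mk'_surjective H wb
    set v : G' := (v' : G') with hv
    have hvN : v ∈ N := v'.2
    have hv2x : v ^ 2 ∉ zpowers x := by
      intro h
      apply hwb2
      rw [← hv', ← map_pow, QuotientGroup.mk'_apply, QuotientGroup.eq_one_iff]
      rw [hHdef, Subgroup.mem_subgroupOf]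
      simpa using h
    have hv4x : (v ^ 2) ^ 2 ∈ zpowers x := by
      have : v' ^ 4 ∈ H := by
        rw [← QuotientGroup.eq_one_iff (v' ^ 4), ← QuotientGroup.mk'_apply, map_pow, hv', hwb4]
      rw [hHdef, Subgroup.mem_subgroupOf] at this
      rw [← pow_mul]
      simpa using this
    have hconjv2 := hF (v ^ 2) (pow_mem hvN 2) hv2x hv4x
    obtain ⟨t, ht⟩ := mem_zpowers_iff.mp ((Subgroup.mem_normalizer_iff.mp hvN x).mp (mem_zpowers x))
    have e1 : (v ^ 2) * x * (v ^ 2)⁻¹ = x ^ (t * t) := by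
      have h1 : v * x * v⁻¹ = x ^ t := ht.symm
      calc (v ^ 2) * x * (v ^ 2)⁻¹ = v * (v * x * v⁻¹) * v⁻¹ := by
            rw [pow_two, mul_inv_rev]; group
        _ = v * x ^ t * v⁻¹ := by rw [h1]
        _ = (v * x * v⁻¹) ^ t := by rw [conj_zpow]
        _ = (x ^ t) ^ t := by rw [h1]
        _ = x ^ (t * t) := by rw [← zpow_mul]
    rw [hconjv2.2.1] at e1
    -- x⁻¹ = x ^ (t*t)  →  2^n ∣ t² + 1 → contradiction mod 4
    have e2 : x ^ (-1 : ℤ) = x ^ (t * t) := by rw [zpow_neg_one]; exact e1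
    have hdvd2 : ((orderOf x : ℤ)) ∣ t * t - (-1) := (zpow_eq_zpow_iff_modEq.mp e2).dvd
    rw [hxn] at hdvd2
    push_cast at hdvd2
    have h4 : (4 : ℤ) ∣ t * t + 1 := by
      have : (4:ℤ) ∣ (2:ℤ)^n := by
        rw [show (4:ℤ) = 2^2 by norm_num]
        exact pow_dvd_pow _ hn
      have := this.trans hdvd2
      simpa [sub_neg_eq_add] using this
    obtain ⟨d, hd⟩ := h4
    rcases Int.even_or_odd t with ⟨r, hr⟩ | ⟨r, hr⟩
    · have : (1:ℤ) = 4 * (d - r * r) := by rw [hr] at hd; linarith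
      omega
    · have : (2:ℤ) = 4 * (d - r * r - r) := by rw [hr] at hd; linarith
      omega
  -- N ⧸ H = {1, ybar}
  have hinv1 : ybar⁻¹ = ybar :=
    inv_eq_of_mul_eq_one_left (by rw [← pow_two]; exact hexp ybar)
  have huniq : ∀ vb : N ⧸ H, vb = 1 ∨ vb = ybar := by
    intro vb
    by_contra hboth
    push_neg at hboth
    obtain ⟨hvb1, hvby⟩ := hboth
    have hprod : vb * ybar ≠ 1 := by
      intro h
      exact hvby (by rw [← hinv1]; exact eq_inv_of_mul_eq_one_left h)
    obtain ⟨v', hv'⟩ := QuotientGroup.mk'_surjective H vb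
    set v : G' := (v' : G') with hvdef
    have hvN : v ∈ N := v'.2
    have hnot1 : ∀ w' : N, QuotientGroup.mk' H w' ≠ 1 → (w' : G') ∉ zpowers x := by
      intro w' hw1 hmem
      apply hw1
      rw [QuotientGroup.mk'_apply, QuotientGroup.eq_one_iff, hHdef, Subgroup.mem_subgroupOf]
      exact hmem
    have hsqmem : ∀ w' : N, ((w' : G')) ^ 2 ∈ zpowers x := by
      intro w'
      have h1 : w' ^ 2 ∈ H := by
        rw [← QuotientGroup.eq_one_iff (w' ^ 2), ← QuotientGroup.mk'_apply, map_pow]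
        exact hexp _
      rw [hHdef, Subgroup.mem_subgroupOf] at h1
      simpa using h1
    have hFv := hF v hvN (hnot1 v' (by rw [hv']; exact hvb1)) (by
      have := hsqmem v'
      simpa using this)
    have hFvy := hF (v * y) (mul_mem hvN hyN) (by
      have := hnot1 (v' * y') (by rw [map_mul, hv', hy'q]; exact hprod)
      simpa using this) (by
      have := hsqmem (v' * y')
      simpa using this)
    have e1 : (v * y) * x * (v * y)⁻¹ = x := by
      rw [mul_inv_rev]
      calc v * y * x * (y⁻¹ * v⁻¹) = v * (y * x * y⁻¹) * v⁻¹ := by group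
        _ = v * x⁻¹ * v⁻¹ := by rw [hyxy]
        _ = (v * x * v⁻¹)⁻¹ := by group
        _ = (x⁻¹)⁻¹ := by rw [hFv.2.1]
        _ = x := inv_inv x
    rw [hFvy.2.1] at e1
    -- x⁻¹ = x
    have hx2 : x ^ 2 = 1 := by
      rw [pow_two, ← eq_inv_iff_mul_eq_one]
      exact e1.symm
    have : orderOf x ∣ 2 := orderOf_dvd_iff_pow_eq_one.mpr hx2
    rw [hxn] at this
    have := Nat.le_of_dvd (by norm_num) this
    have : (2:ℕ)^2 ≤ 2^n := Nat.pow_le_pow_right (by norm_num) hn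
    omega
  -- covering of N
  have hcovN : ∀ u : N, (u : G') ∈ zpowers x ∨ ∃ k : ℤ, (u : G') = x ^ k * y := by
    intro u
    rcases huniq (QuotientGroup.mk' H u) with h1 | hyb
    · left
      rw [QuotientGroup.mk'_apply, QuotientGroup.eq_one_iff, hHdef,
        Subgroup.mem_subgroupOf] at h1
      exact h1
    · right
      have hmem : u * y'⁻¹ ∈ H := by
        rw [← QuotientGroup.eq_one_iff (u * y'⁻¹), ← QuotientGroup.mk'_apply, map_mul, map_inv,
          hyb, hy'q, mul_inv_cancel]
      rw [hHdef, Subgroup.mem_subgroupOf] at hmem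
      obtain ⟨k, hk⟩ := mem_zpowers_iff.mp hmem
      refine ⟨k, ?_⟩
      have hcoe : ((u * y'⁻¹ : N) : G') = (u : G') * y⁻¹ := by simp [hy]
      rw [hcoe] at hk
      rw [hk]
      group
  -- N = ⊤
  have hNtop : N = ⊤ := by
    by_cases hn2 : n = 2
    · -- x² is central; quotient by Z has exponent 2; ⟨x⟩ is normal
      have hsqZ : ∀ g : G', g ^ 2 ∈ Z := by
        intro g
        rcases eq_or_ne (g ^ 2) 1 with h1 | hne
        · rw [h1]; exact one_mem Z
        · apply hcon
          have h4 : (g ^ 2) ^ 2 = 1 := by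
            rw [← pow_mul]
            apply orderOf_dvd_iff_pow_eq_one.mp
            have := hdvd g
            rwa [hn2] at this
          have : orderOf (g ^ 2) ∣ 2 := orderOf_dvd_iff_pow_eq_one.mpr h4
          rcases (Nat.dvd_prime Nat.prime_two).mp this with h | h
          · exact absurd (orderOf_eq_one_iff.mp h) hne
          · exact h
      haveI : Z.Normal := normal_of_le_center hZcent
      have hcomm : ∀ g h : G', g * h * g⁻¹ * h⁻¹ ∈ Z := by
        intro g h
        rw [← QuotientGroup.eq_one_iff]
        have hq2 : ∀ ab : G' ⧸ Z, ab * ab = 1 := by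
          intro ab
          refine QuotientGroup.induction_on ab ?_
          intro a
          rw [← QuotientGroup.mk_mul, ← pow_two, QuotientGroup.eq_one_iff]
          exact hsqZ a
        have hinv : ∀ ab : G' ⧸ Z, ab⁻¹ = ab := fun ab => inv_eq_of_mul_eq_one_left (hq2 ab)
        have habel : ∀ ab bb : G' ⧸ Z, ab * bb = bb * ab := by
          intro ab bb
          calc ab * bb = (ab * bb)⁻¹ := (hinv _).symm
            _ = bb⁻¹ * ab⁻¹ := mul_inv_rev _ _
            _ = bb * ab := by rw [hinv, hinv]
        have h1 : ((g * h) * (h * g)⁻¹ : G') ∈ Z := by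
          rw [← QuotientGroup.eq_one_iff, QuotientGroup.mk_mul, QuotientGroup.mk_inv,
            QuotientGroup.mk_mul, QuotientGroup.mk_mul,
            habel ((g : G' ⧸ Z)) ((h : G' ⧸ Z))]
          group
        have h2 : g * h * g⁻¹ * h⁻¹ = (g * h) * (h * g)⁻¹ := by group
        rw [QuotientGroup.eq_one_iff]
        rw [h2]
        exact h1
      have hnormal : (zpowers x).Normal := by
        constructor
        intro m hm g
        obtain ⟨k, hk⟩ := mem_zpowers_iff.mp hm
        have h1 : g * m * g⁻¹ = (g * x * g⁻¹) ^ k := by rw [← hk, conj_zpow]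
        rw [h1]
        have hgx : g * x * g⁻¹ ∈ zpowers x := by
          have hc' := hcomm g x
          have h2 : g * x * g⁻¹ = (g * x * g⁻¹ * x⁻¹) * x := by group
          rw [h2]
          exact mul_mem (hZle hc') (mem_zpowers x)
        exact zpow_mem hgx k
      rw [hNdef]
      exact Subgroup.normalizer_eq_top_iff.mpr hnormal
    · have hn3 : 3 ≤ n := by omega
      by_contra hne
      have hlt2 : N < Subgroup.normalizer (N : Set G') := hNC N (lt_top_iff_ne_top.mpr hne)
      obtain ⟨w, hwN2, hwnN⟩ := SetLike.exists_of_lt hlt2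
      have hxN : x ∈ N := hlt.le (mem_zpowers x)
      have hwxN : w * x * w⁻¹ ∈ N := (Subgroup.mem_normalizer_iff.mp hwN2 x).mp hxN
      have hordc : orderOf (w * x * w⁻¹) = 2 ^ n := by
        rw [← hxn]
        have := orderOf_injective (MulAut.conj w).toMonoidHom (MulEquiv.injective _) x
        simpa [MulAut.conj_apply] using this
      rcases hcovN ⟨w * x * w⁻¹, hwxN⟩ with hin | ⟨k, hk⟩
      · -- conjugate lies in ⟨x⟩; then w normalizes ⟨x⟩, contradiction
        simp only at hin
        set a := w * x * w⁻¹ with ha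
        have hza : zpowers a ≤ zpowers x := (zpowers_le).mpr hin
        have hcard : Nat.card (zpowers a) = Nat.card (zpowers x) := by
          rw [Nat.card_zpowers, Nat.card_zpowers, hordc, hxn]
        have hncard : ((zpowers a : Set G')).ncard = ((zpowers x : Set G')).ncard := by
          rw [← Nat.card_coe_set_eq, ← Nat.card_coe_set_eq]
          exact hcard
        have heq : zpowers a = zpowers x :=
          SetLike.coe_injective
            (Set.eq_of_subset_of_ncard_le hza (le_of_eq hncard.symm) (Set.toFinite _))
        apply hwnN
        rw [hNdef, Subgroup.mem_normalizer_iff]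
        intro h
        constructor
        · intro hh
          obtain ⟨i, hi⟩ := mem_zpowers_iff.mp hh
          rw [← hi, ← conj_zpow]
          exact zpow_mem hin i
        · intro hh
          have hh2 : w * h * w⁻¹ ∈ zpowers a := heq.symm.le hh
          obtain ⟨i, hi⟩ := mem_zpowers_iff.mp hh2
          have h2 : a ^ i = w * h * w⁻¹ := hi
          rw [ha, conj_zpow] at h2
          have h3 : x ^ i = h := by
            have := mul_left_cancel (mul_right_cancel h2)
            exact this
          rw [← h3]
          exact zpow_mem (mem_zpowers x) i
      · -- conjugate is x^k y, of order 4: contradiction with order 2^n ≥ 8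
        simp only at hk
        have hyxk : ∀ j : ℤ, y * x ^ j * y⁻¹ = x ^ (-j) := by
          intro j
          rw [← conj_zpow, hyxy, inv_zpow, ← zpow_neg]
        have hsq : (x ^ k * y) ^ 2 = x ^ ((2:ℕ) ^ (n-1)) := by
          calc (x ^ k * y) ^ 2 = x ^ k * (y * x ^ k * y⁻¹) * y ^ 2 := by
                rw [pow_two, pow_two]; group
            _ = x ^ k * x ^ (-k) * y ^ 2 := by rw [hyxk]
            _ = y ^ 2 := by rw [← zpow_add]; simp
            _ = x ^ ((2:ℕ) ^ (n-1)) := hysq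
        have h4 : (x ^ k * y) ^ 4 = 1 := by
          rw [show (4:ℕ) = 2 * 2 by norm_num, pow_mul, hsq, ← pow_mul]
          rw [show (2:ℕ) ^ (n-1) * 2 = 2 ^ n by rw [← pow_succ]; congr 1; omega]
          rw [← hxn]
          exact pow_orderOf_eq_one x
        have hdvd4 : orderOf (x ^ k * y) ∣ 4 := orderOf_dvd_iff_pow_eq_one.mpr h4
        rw [← hk, hordc] at hdvd4
        have := Nat.le_of_dvd (by norm_num) hdvd4
        have : (2:ℕ)^3 ≤ 2^n := Nat.pow_le_pow_right (by norm_num) hn3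
        omega
  -- global covering and the quaternion isomorphism
  have hcov : ∀ g : G', g ∈ zpowers x ∨ ∃ k : ℤ, g = x ^ k * y := by
    intro g
    have := hcovN ⟨g, hNtop ▸ mem_top g⟩
    simpa using this
  have hxq : orderOf x = 2 * 2 ^ (n - 1) := by
    rw [hxn, ← pow_succ']
    congr 1
    omega
  obtain ⟨e⟩ := iso_quaternion (2 ^ (n-1)) (by positivity) x y hxq hynx hysq hyxy hcov
  exact (hnq (n-1) (by omega)).false e


/-- If `G̃` is a finite non-cyclic, non-(generalized-)quaternion `p`-group and
`Z` is a central subgroup of order `p`, then the quotient map `G̃ → G̃/Z` is a forcing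
extension. -/
theorem forcing_of_central_quotient (p : ℕ) (hp : p.Prime)
    (G' : Type) [Group G'] [Finite G'] (hpG : IsPGroup p G') (hnc : ¬ IsCyclic G')
    (hnq : ∀ n : ℕ, 1 ≤ n → IsEmpty (G' ≃* QuaternionGroup (2 ^ n)))
    (Z : Subgroup G') (hZcard : Nat.card Z = p) (hZcent : Z ≤ Subgroup.center G') :
    @IsForcingExtension G' (G' ⧸ Z) _
      (@QuotientGroup.Quotient.group G' _ Z (normal_of_le_center hZcent))
      (@QuotientGroup.mk' G' _ Z (normal_of_le_center hZcent)) := by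
  haveI hZnormal : Z.Normal := normal_of_le_center hZcent
  obtain ⟨x, hxord, hxZ⟩ := exists_order_p_outside p hp G' hpG hnc hnq Z hZcard hZcent
  constructor
  · exact QuotientGroup.mk'_surjective Z
  · refine ⟨QuotientGroup.mk' Z x, ?_⟩
    intro c hconj g hg
    obtain ⟨u, hu⟩ := isConj_iff.mp hconj
    have hc₀ : orderOf (QuotientGroup.mk' Z x) = p := by
      have h1 : (QuotientGroup.mk' Z x) ^ p = 1 := by
        rw [← map_pow, ← hxord, pow_orderOf_eq_one, map_one]
      have h2 : QuotientGroup.mk' Z x ≠ 1 := by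
        rw [Ne, QuotientGroup.mk'_apply, QuotientGroup.eq_one_iff]
        exact hxZ
      rcases (Nat.dvd_prime hp).mp (orderOf_dvd_iff_pow_eq_one.mpr h1) with h | h
      · exact absurd (orderOf_eq_one_iff.mp h) h2
      · exact h
    have hcord : orderOf c = p := by
      rw [← hu, ← hc₀]
      have := orderOf_injective (MulAut.conj u).toMonoidHom (MulEquiv.injective _)
        (QuotientGroup.mk' Z x)
      simpa [MulAut.conj_apply] using this
    rw [hcord]
    obtain ⟨hlift, hl⟩ := QuotientGroup.mk'_surjective Z u
    have hπ : QuotientGroup.mk' Z (hlift * x * hlift⁻¹) = c := by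
      rw [map_mul, map_mul, map_inv, hl, hu]
    have hdiff : g * (hlift * x * hlift⁻¹)⁻¹ ∈ Z := by
      rw [← QuotientGroup.eq_one_iff (N := Z), ← QuotientGroup.mk'_apply, map_mul, map_inv, hπ,
        hg, mul_inv_cancel]
    set z : G' := g * (hlift * x * hlift⁻¹)⁻¹ with hzdef
    have hzcomm : Commute z (hlift * x * hlift⁻¹) :=
      ((Subgroup.mem_center_iff.mp (hZcent hdiff)) (hlift * x * hlift⁻¹)).symm
    have hzp : z ^ p = 1 := by
      apply orderOf_dvd_iff_pow_eq_one.mp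
      have h1 : orderOf (⟨z, hdiff⟩ : Z) ∣ Nat.card Z := orderOf_dvd_natCard _
      rw [hZcard, Subgroup.orderOf_mk] at h1
      exact h1
    have hgz : g = z * (hlift * x * hlift⁻¹) := by rw [hzdef]; group
    have hgp : g ^ p = 1 := by
      rw [hgz, hzcomm.mul_pow, hzp, one_mul, conj_pow, ← hxord, pow_orderOf_eq_one]
      group
    have hg1 : g ≠ 1 := by
      intro h
      rw [h, map_one] at hg
      rw [← hg, orderOf_one] at hcord
      exact hp.one_lt.ne hcord
    rcases (Nat.dvd_prime hp).mp (orderOf_dvd_iff_pow_eq_one.mpr hgp) with h | h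
    · exact absurd (orderOf_eq_one_iff.mp h) hg1
    · exact h
end

section
/- Let n ≥ 1 and let Q = Q(n) be the generalized quaternion group of order 2^{n+2}, with x its distinguished element of order 2^{n+1}. Then for every 1 ≤ k ≤ n + 1, the k-th term G_k of the lower exponent-2 central series of Q equals the cyclic subgroup generated by x^{2^k}. In particular G_{n+1} = {e} and G_n ≠ {e}, so the 2-class of Q(n) is n + 1. -/
/-- The lower exponent-`p` central series of a group: `G₀ = G` and
`G_{j+1} = G_j^p [G_j, G]`, the subgroup generated by `p`-th powers of elements of `G_j`
together with commutators of elements of `G_j` with elements of `G`. -/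
def lowerExpPSeries (p : ℕ) (G : Type*) [Group G] : ℕ → Subgroup G
  | 0 => ⊤
  | j + 1 => Subgroup.closure {x : G | ∃ g ∈ lowerExpPSeries p G j, x = g ^ p} ⊔
      ⁅lowerExpPSeries p G j, (⊤ : Subgroup G)⁆

set_option linter.unusedSectionVars false

namespace QuatAux

open QuaternionGroup Subgroup
open scoped commutatorElement

variable {m : ℕ}

lemma a_inv (i : ZMod (2*m)) : (a i : QuaternionGroup m)⁻¹ = a (-i) := rfl

lemma xa_inv (i : ZMod (2*m)) : (xa i : QuaternionGroup m)⁻¹ = xa ((m : ZMod (2*m)) + i) := rfl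

variable [NeZero m]

instance : NeZero (2*m) := ⟨by have := NeZero.ne m; omega⟩

lemma a_one_zpow (z : ℤ) : (a 1 : QuaternionGroup m) ^ z = a (z : ZMod (2*m)) := by
  cases z with
  | ofNat k => rw [Int.ofNat_eq_coe, zpow_natCast, a_one_pow]; norm_cast
  | negSucc k =>
      rw [zpow_negSucc, a_one_pow, a_inv]
      congr 1
      push_cast
      ring

lemma sq_mem (c : ZMod (2*m)) :
    (a c : QuaternionGroup m) ^ 2 ∈ zpowers ((a 1 : QuaternionGroup m) ^ 2) := by
  refine ⟨(c.val : ℤ), ?_⟩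
  show ((a 1 : QuaternionGroup m) ^ 2) ^ (c.val : ℤ) = _
  rw [zpow_natCast, ← pow_mul, a_one_pow, sq, a_mul_a]
  congr 1
  push_cast [ZMod.natCast_val, ZMod.cast_id]
  ring

lemma comm_a (s : ZMod (2*m)) (h : QuaternionGroup m) :
    ⁅(a s : QuaternionGroup m), h⁆ ∈ zpowers ((a s : QuaternionGroup m) ^ 2) := by
  cases h with
  | a j =>
    have : ⁅(a s : QuaternionGroup m), a j⁆ = 1 := by
      rw [commutatorElement_eq_one_iff_mul_comm, a_mul_a, a_mul_a, add_comm]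
    rw [this]; exact one_mem _
  | xa j =>
    have : ⁅(a s : QuaternionGroup m), xa j⁆ = (a s : QuaternionGroup m) ^ 2 := by
      show a s * xa j * (a s)⁻¹ * (xa j)⁻¹ = _
      rw [a_inv, xa_inv, a_mul_xa, xa_mul_a, xa_mul_xa, sq, a_mul_a]
      congr 1
      have h2 : ((2 * m : ℕ) : ZMod (2*m)) = 0 := ZMod.natCast_self _
      push_cast at h2 ⊢
      ring_nf
      ring_nf at h2
      linear_combination h2
    rw [this]; exact mem_zpowers _

lemma comm_xa (i : ZMod (2*m)) (h : QuaternionGroup m) :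
    ⁅(xa i : QuaternionGroup m), h⁆ ∈ zpowers ((a 1 : QuaternionGroup m) ^ 2) := by
  cases h with
  | a j =>
    have : ⁅(xa i : QuaternionGroup m), a j⁆ = ((a j : QuaternionGroup m) ^ 2)⁻¹ := by
      show xa i * a j * (xa i)⁻¹ * (a j)⁻¹ = _
      rw [xa_inv, a_inv, xa_mul_a, xa_mul_xa, a_mul_a, sq, a_mul_a, a_inv]
      congr 1
      have h2 : ((2 * m : ℕ) : ZMod (2*m)) = 0 := ZMod.natCast_self _
      push_cast at h2 ⊢
      linear_combination h2
    rw [this]; exact inv_mem (sq_mem j)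
  | xa j =>
    have : ⁅(xa i : QuaternionGroup m), xa j⁆ = (a (j - i) : QuaternionGroup m) ^ 2 := by
      show xa i * xa j * (xa i)⁻¹ * (xa j)⁻¹ = _
      rw [xa_inv, xa_inv, xa_mul_xa, a_mul_xa, xa_mul_xa, sq, a_mul_a]
      congr 1
      have h2 : ((2 * m : ℕ) : ZMod (2*m)) = 0 := ZMod.natCast_self _
      push_cast at h2 ⊢
      linear_combination h2
    rw [this]; exact sq_mem _

lemma comm_a_pow (z : ℤ) (h : QuaternionGroup m) :
    ⁅(a 1 : QuaternionGroup m) ^ z, h⁆ ∈ zpowers (((a 1 : QuaternionGroup m) ^ z) ^ 2) := by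
  rw [a_one_zpow]
  exact comm_a _ h

end QuatAux

open QuaternionGroup Subgroup QuatAux in
/-- For the generalized quaternion group `Q(n)` of order `2^(n+2)` (that is,
`QuaternionGroup (2^n)`), with `x = a 1` its distinguished element of order `2^(n+1)`, the `k`-th
term of the lower exponent-`2` central series equals `⟨x^(2^k)⟩` for `1 ≤ k ≤ n+1`; in
particular the series reaches the trivial group exactly at step `n+1`, i.e. the `2`-class of
`Q(n)` is `n+1`. -/
theorem lowerExpPSeries_quaternion (n : ℕ) (hn : 1 ≤ n) :
    (∀ k : ℕ, 1 ≤ k → k ≤ n + 1 →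
      lowerExpPSeries 2 (QuaternionGroup (2 ^ n)) k =
        Subgroup.zpowers ((QuaternionGroup.a 1 : QuaternionGroup (2 ^ n)) ^ (2 ^ k))) ∧
    lowerExpPSeries 2 (QuaternionGroup (2 ^ n)) (n + 1) = ⊥ ∧
    lowerExpPSeries 2 (QuaternionGroup (2 ^ n)) n ≠ ⊥ ∧
    IsLeast {c : ℕ | lowerExpPSeries 2 (QuaternionGroup (2 ^ n)) c = ⊥} (n + 1) := by
  haveI : NeZero (2 ^ n) := ⟨(pow_pos two_pos n).ne'⟩
  set Q := QuaternionGroup (2 ^ n)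
  set u : Q := QuaternionGroup.a 1 with hu
  -- the main claim, for all k ≥ 1 (no upper bound needed)
  have main : ∀ k : ℕ, 1 ≤ k →
      lowerExpPSeries 2 Q k = zpowers (u ^ (2 ^ k)) := by
    intro k hk
    induction k with
    | zero => omega
    | succ j ih =>
      rcases Nat.eq_or_lt_of_le hk with h1 | h1
      · -- base case j = 0
        obtain rfl : j = 0 := by omega
        show Subgroup.closure {x : Q | ∃ g ∈ (⊤ : Subgroup Q), x = g ^ 2} ⊔
          ⁅(⊤ : Subgroup Q), (⊤ : Subgroup Q)⁆ = zpowers (u ^ 2 ^ 1)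
        rw [pow_one]
        apply le_antisymm
        · apply sup_le
          · rw [Subgroup.closure_le]
            rintro x ⟨g, -, rfl⟩
            cases g with
            | a c => exact sq_mem c
            | xa c =>
              rw [xa_sq]
              have h2n : (QuaternionGroup.a ((2^n : ℕ) : ZMod (2 * 2^n)) : Q)
                  = (u ^ 2) ^ (2 ^ (n-1)) := by
                rw [← pow_mul, a_one_pow]
                congr 1
                congr 1
                rw [← pow_succ']
                congr 1
                omega
              rw [h2n]
              exact pow_mem (mem_zpowers _) _
          · rw [Subgroup.commutator_le]
            rintro g - h -
            cases g with
            | a s => exact zpowers_le.mpr (sq_mem s) (comm_a s h)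
            | xa i => exact comm_xa i h
        · rw [Subgroup.zpowers_le]
          refine le_sup_left (α := Subgroup Q) ?_
          exact Subgroup.subset_closure ⟨u, mem_top _, rfl⟩
      · -- inductive step, 1 ≤ j
        have hj : 1 ≤ j := by omega
        have hGj := ih hj
        have key : ∀ g ∈ zpowers (u ^ 2 ^ j), g ^ 2 ∈ zpowers (u ^ 2 ^ (j+1)) := by
          rintro g ⟨z, rfl⟩
          refine ⟨z, ?_⟩
          show (u ^ 2 ^ (j+1)) ^ z = _
          rw [← zpow_natCast ((u ^ 2 ^ j) ^ z) 2, ← zpow_mul, mul_comm, zpow_mul,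
            zpow_natCast, ← pow_mul, ← pow_succ]
        show Subgroup.closure {x : Q | ∃ g ∈ lowerExpPSeries 2 Q j, x = g ^ 2} ⊔
          ⁅lowerExpPSeries 2 Q j, (⊤ : Subgroup Q)⁆ = zpowers (u ^ 2 ^ (j+1))
        rw [hGj]
        apply le_antisymm
        · apply sup_le
          · rw [Subgroup.closure_le]
            rintro x ⟨g, hg, rfl⟩
            exact key g hg
          · rw [Subgroup.commutator_le]
            rintro g hg h -
            obtain ⟨z, hzeq⟩ := id hg
            have hgform : g = u ^ (((2 ^ j : ℕ) : ℤ) * z) := by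
              rw [zpow_mul, zpow_natCast]; exact hzeq.symm
            have hcomm := comm_a_pow (m := 2 ^ n) (((2 ^ j : ℕ) : ℤ) * z) h
            rw [← hgform] at hcomm
            exact zpowers_le.mpr (key g hg) hcomm
        · rw [Subgroup.zpowers_le]
          refine le_sup_left (α := Subgroup Q) ?_
          exact Subgroup.subset_closure ⟨u ^ 2 ^ j, mem_zpowers _, by rw [← pow_mul, ← pow_succ]⟩
  have hord : orderOf u = 2 ^ (n + 1) := by
    rw [hu, orderOf_a_one, ← pow_succ']
  have hbot : lowerExpPSeries 2 Q (n + 1) = ⊥ := by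
    have h1 : u ^ 2 ^ (n+1) = 1 := by rw [← hord]; exact pow_orderOf_eq_one u
    rw [main (n+1) (by omega), h1, Subgroup.zpowers_one_eq_bot]
  have hne : ∀ c : ℕ, 1 ≤ c → c ≤ n → lowerExpPSeries 2 Q c ≠ ⊥ := by
    intro c h1 h2 hc
    rw [main c h1, Subgroup.zpowers_eq_bot] at hc
    have := orderOf_dvd_of_pow_eq_one hc
    rw [hord] at this
    have hle := Nat.le_of_dvd (pow_pos two_pos c) this
    have : (2:ℕ) ^ c ≤ 2 ^ n := Nat.pow_le_pow_right two_pos h2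
    have : (2:ℕ) ^ n < 2 ^ (n+1) := Nat.pow_lt_pow_right one_lt_two (by omega)
    omega
  refine ⟨fun k hk _ => main k hk, hbot, hne n hn le_rfl, hbot, ?_⟩
  intro c hc
  by_contra h
  push_neg at h
  rcases Nat.eq_zero_or_pos c with rfl | hc1
  · have : (QuaternionGroup.xa 0 : Q) ∈ lowerExpPSeries 2 Q 0 := mem_top _
    rw [hc] at this
    rw [Subgroup.mem_bot, QuaternionGroup.one_def] at this
    cases this
  · exact hne c hc1 (by omega) hc
end

section
/- For every n ≥ 1, the generalized quaternion group Q(n) has trivial Schur multiplier; that is, the second group homology of Q(n) with trivial integer coefficients, H₂(Q(n), ℤ), is trivial. -/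
open scoped commutatorElement

namespace SchurQuatAux

variable {E : Type} [Group E]

/-- Commutators are unchanged by multiplying by central elements. -/
lemma commutator_mul_central {g h z w : E}
    (hz : z ∈ Subgroup.center E) (hw : w ∈ Subgroup.center E) :
    ⁅g * z, h * w⁆ = ⁅g, h⁆ := by
  have hz' := Subgroup.mem_center_iff.mp hz
  have hw' := Subgroup.mem_center_iff.mp hw
  have step1 : ⁅g * z, h * w⁆ = ⁅g * z, h⁆ := by
    simp only [commutatorElement_def, mul_inv_rev]
    calc g * z * (h * w) * (z⁻¹ * g⁻¹) * (w⁻¹ * h⁻¹)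
        = g * z * h * (w * (z⁻¹ * g⁻¹ * w⁻¹)) * h⁻¹ := by group
      _ = g * z * h * (z⁻¹ * g⁻¹ * w⁻¹ * w) * h⁻¹ := by rw [hw' (z⁻¹ * g⁻¹ * w⁻¹)]
      _ = g * z * h * (z⁻¹ * g⁻¹) * h⁻¹ := by group
  have step2 : ⁅g * z, h⁆ = ⁅g, h⁆ := by
    simp only [commutatorElement_def, mul_inv_rev]
    calc g * z * h * (z⁻¹ * g⁻¹) * h⁻¹
        = g * (z * h * z⁻¹) * g⁻¹ * h⁻¹ := by group
      _ = g * (h * z * z⁻¹) * g⁻¹ * h⁻¹ := by rw [hz' h]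
      _ = g * h * g⁻¹ * h⁻¹ := by group
  rw [step1, step2]

open QuaternionGroup in
/-- Core lemma: in any central extension of a dicyclic group, the central kernel
meets the commutator subgroup trivially. -/
lemma core (m : ℕ) [NeZero m] {E : Type} [Group E]
    (π : E →* QuaternionGroup m) (hs : Function.Surjective π)
    (hc : π.ker ≤ Subgroup.center E) :
    π.ker ⊓ commutator E ≤ ⊥ := by
  haveI : NeZero (2 * m) := ⟨Nat.mul_ne_zero two_ne_zero (NeZero.ne m)⟩
  obtain ⟨e, he⟩ := hs (a 1)
  obtain ⟨f, hf⟩ := hs (xa 0)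
  -- inverse computations in the quaternion group
  have hainv : ∀ i : ZMod (2 * m), (a i : QuaternionGroup m)⁻¹ = a (-i) := by
    intro i
    apply inv_eq_of_mul_eq_one_right
    rw [a_mul_a, add_neg_cancel, one_def]
  have hxainv : ∀ i : ZMod (2 * m), (xa i : QuaternionGroup m)⁻¹ = xa ((m : ZMod (2 * m)) + i) := by
    intro i
    apply inv_eq_of_mul_eq_one_right
    rw [xa_mul_xa]
    have h2m : ((m : ZMod (2 * m)) + (m + i)) - i = 0 := by
      have : ((2 * m : ℕ) : ZMod (2 * m)) = 0 := ZMod.natCast_self _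
      push_cast at this
      linear_combination this
    rw [h2m, one_def]
  have hazpow : ∀ k : ℤ, (a 1 : QuaternionGroup m) ^ k = a (k : ZMod (2 * m)) := by
    intro k
    rcases k with k | k
    · rw [Int.ofNat_eq_coe, zpow_natCast, a_one_pow]
      congr 1
      push_cast
      rfl
    · rw [zpow_negSucc, a_one_pow, hainv]
      congr 1
      push_cast
      ring
  have hcen : ∀ {z : E}, z ∈ π.ker → ∀ g : E, z * g = g * z := fun hz g =>
    (Subgroup.mem_center_iff.mp (hc hz) g).symm
  -- the central element z₃ encoding the relation f⁻¹ e f = e⁻¹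
  set z₃ : E := f⁻¹ * e * f * e with hz₃def
  have hz₃ker : z₃ ∈ π.ker := by
    rw [MonoidHom.mem_ker, hz₃def, map_mul, map_mul, map_mul, map_inv, he, hf, hxainv,
      xa_mul_a, xa_mul_xa, a_mul_a]
    rw [show ((m : ZMod (2 * m)) + 0 - ((m : ZMod (2 * m)) + 0 + 1)) + 1 = 0 by ring, one_def]
  have hz₃cen : ∀ g : E, z₃ * g = g * z₃ := hcen hz₃ker
  have hz₃zcen : ∀ (k : ℤ) (g : E), z₃ ^ k * g = g * z₃ ^ k := by
    intro k g
    exact (Subgroup.mem_center_iff.mp (Subgroup.zpow_mem _ (hc hz₃ker) k) g).symm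
  have hcome : Commute e⁻¹ z₃ := (hz₃cen e⁻¹).symm
  have hfe : f⁻¹ * e * f = e⁻¹ * z₃ := by
    have h1 : z₃ * e⁻¹ = f⁻¹ * e * f := by rw [hz₃def]; group
    rw [← h1]
    exact hz₃cen e⁻¹
  have hconj : ∀ k : ℤ, f⁻¹ * e ^ k * f = e ^ (-k) * z₃ ^ k := by
    intro k
    have h1 : f⁻¹ * e ^ k * f = (f⁻¹ * e * f) ^ k := by
      rw [show f⁻¹ * e * f = f⁻¹ * e * f⁻¹⁻¹ by rw [inv_inv], conj_zpow, inv_inv]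
    rw [h1, hfe, hcome.mul_zpow, inv_zpow, zpow_neg]
  have hconj' : ∀ k : ℤ, f * e ^ k * f⁻¹ = e ^ (-k) * z₃ ^ k := by
    intro k
    have h1 := hconj (-k)
    have h2 : e ^ (-k) = f * (e ^ (- -k) * z₃ ^ (-k)) * f⁻¹ := by
      rw [← h1]; group
    calc f * e ^ k * f⁻¹
        = f * (e ^ (- -k) * z₃ ^ (-k)) * f⁻¹ * z₃ ^ k := by
          rw [show f * (e ^ (- -k) * z₃ ^ (-k)) * f⁻¹ * z₃ ^ k
              = f * e ^ (- -k) * (z₃ ^ (-k) * (f⁻¹ * z₃ ^ k)) by group,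
            ← hz₃zcen k f⁻¹,
            show f * e ^ (- -k) * (z₃ ^ (-k) * (z₃ ^ k * f⁻¹)) = f * e ^ (- -k) * f⁻¹ by group]
          norm_num
      _ = e ^ (-k) * z₃ ^ k := by rw [← h2]
  -- the element generating the image of the commutator subgroup
  set c : E := e ^ (-2 : ℤ) * z₃ with hcdef
  have hcomc : Commute (e ^ (-2 : ℤ)) z₃ := (hz₃cen _).symm
  have hcz : ∀ s : ℤ, c ^ s = e ^ (-2 * s) * z₃ ^ s := by
    intro s
    rw [hcdef, hcomc.mul_zpow, ← zpow_mul]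
  -- the key relation e^(2m) = z₃^m coming from f² = e^m (mod center)
  have hf2 : π (f ^ 2) = a (m : ZMod (2 * m)) := by
    rw [map_pow, hf, xa_sq]
  have hem : π (e ^ (m : ℤ)) = a (m : ZMod (2 * m)) := by
    rw [map_zpow, he, hazpow]
    norm_cast
  have hz₂ker : f ^ 2 * (e ^ (m : ℤ))⁻¹ ∈ π.ker := by
    rw [MonoidHom.mem_ker, map_mul, map_inv, hf2, hem, mul_inv_cancel]
  have key : e ^ (2 * (m : ℤ)) = z₃ ^ (m : ℤ) := by
    set z₂ : E := f ^ 2 * (e ^ (m : ℤ))⁻¹ with hz₂def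
    have hf2e : f ^ 2 = z₂ * e ^ (m : ℤ) := by rw [hz₂def]; group
    have h1 : f⁻¹ * f ^ 2 * f = f ^ 2 := by group
    have h2 : f⁻¹ * (z₂ * e ^ (m : ℤ)) * f = z₂ * (e ^ (-(m : ℤ)) * z₃ ^ (m : ℤ)) := by
      rw [show f⁻¹ * (z₂ * e ^ (m : ℤ)) * f = f⁻¹ * z₂ * (e ^ (m : ℤ) * f) by group,
        ← hcen hz₂ker f⁻¹,
        show z₂ * f⁻¹ * (e ^ (m : ℤ) * f) = z₂ * (f⁻¹ * e ^ (m : ℤ) * f) by group,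
        hconj]
    have h3 : z₂ * e ^ (m : ℤ) = z₂ * (e ^ (-(m : ℤ)) * z₃ ^ (m : ℤ)) := by
      rw [← h2, ← hf2e, h1, hf2e]
    have h4 : e ^ (m : ℤ) = e ^ (-(m : ℤ)) * z₃ ^ (m : ℤ) := mul_left_cancel h3
    calc e ^ (2 * (m : ℤ))
        = e ^ (m : ℤ) * e ^ (m : ℤ) := by rw [← zpow_add]; ring_nf
      _ = e ^ (m : ℤ) * (e ^ (-(m : ℤ)) * z₃ ^ (m : ℤ)) := by nth_rewrite 2 [h4]; rfl
      _ = z₃ ^ (m : ℤ) := by group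
  have hcm : c ^ (m : ℤ) = 1 := by
    rw [hcz, show (-2 : ℤ) * (m : ℤ) = -(2 * (m : ℤ)) by ring, zpow_neg, key, inv_mul_cancel]
  -- decomposition of elements of E
  have hdec : ∀ g : E, ∃ (k : ℤ) (z : E), z ∈ π.ker ∧ (g = e ^ k * z ∨ g = e ^ k * f * z) := by
    intro g
    rcases hq : π g with i | i
    · refine ⟨(i.val : ℤ), (e ^ (i.val : ℤ))⁻¹ * g, ?_, Or.inl (by group)⟩
      rw [MonoidHom.mem_ker, map_mul, map_inv, map_zpow, he, hazpow, hq, hainv, a_mul_a]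
      rw [show ((((i.val : ℕ) : ℤ) : ZMod (2 * m)) : ZMod (2 * m)) = i by
        push_cast [ZMod.natCast_val, ZMod.cast_id]; rfl]
      rw [neg_add_cancel, one_def]
    · refine ⟨(((-i).val : ℕ) : ℤ), (e ^ (((-i).val : ℕ) : ℤ) * f)⁻¹ * g, ?_, Or.inr (by group)⟩
      rw [MonoidHom.mem_ker, map_mul, map_inv, map_mul, map_zpow, he, hf, hazpow, hq]
      rw [show ((((-i).val : ℕ) : ℤ) : ZMod (2 * m)) = -i by
        push_cast [ZMod.natCast_val, ZMod.cast_id]; rfl]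
      rw [a_mul_xa, hxainv, xa_mul_xa]
      rw [show ((m : ZMod (2 * m)) + i - ((m : ZMod (2 * m)) + (0 - -i))) = 0 by ring, one_def]
  -- commutator computations
  have case2 : ∀ j k : ℤ, ⁅e ^ j, e ^ k * f⁆ = c ^ (-j) := by
    intro j k
    have h1 : ⁅e ^ j, e ^ k * f⁆ = e ^ (j + k) * (f * e ^ (-j) * f⁻¹) * e ^ (-k) := by
      rw [commutatorElement_def]; group
    rw [h1, hconj' (-j), hcz (-j),
      show e ^ (j + k) * (e ^ (- -j) * z₃ ^ (-j)) * e ^ (-k)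
        = e ^ (j + k) * e ^ (- -j) * (z₃ ^ (-j) * e ^ (-k)) by group,
      hz₃zcen]
    group
  have case4 : ∀ j k : ℤ, ⁅e ^ j * f, e ^ k * f⁆ = c ^ (k - j) := by
    intro j k
    have h1 : ⁅e ^ j * f, e ^ k * f⁆ = e ^ j * (f * e ^ (k - j) * f⁻¹) * e ^ (-k) := by
      rw [commutatorElement_def]; group
    rw [h1, hconj' (k - j), hcz (k - j),
      show e ^ j * (e ^ (-(k - j)) * z₃ ^ (k - j)) * e ^ (-k)
        = e ^ j * e ^ (-(k - j)) * (z₃ ^ (k - j) * e ^ (-k)) by group,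
      hz₃zcen]
    group
  have hC : commutator E ≤ Subgroup.zpowers c := by
    rw [commutator_def, Subgroup.commutator_le]
    intro g _ h _
    obtain ⟨j, z, hz, hg⟩ := hdec g
    obtain ⟨k, w, hw, hh⟩ := hdec h
    rcases hg with hg | hg <;> rcases hh with hh | hh <;> rw [hg, hh]
    · rw [commutator_mul_central (hc hz) (hc hw)]
      have : ⁅e ^ j, e ^ k⁆ = 1 := by rw [commutatorElement_def]; group
      rw [this]; exact Subgroup.one_mem _
    · rw [show e ^ k * f * w = e ^ k * f * w by rfl] at *
      rw [show ⁅e ^ j * z, e ^ k * f * w⁆ = ⁅e ^ j * z, (e ^ k * f) * w⁆ by group]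
      rw [commutator_mul_central (hc hz) (hc hw), case2]
      exact Subgroup.zpow_mem _ (Subgroup.mem_zpowers c) _
    · rw [show ⁅e ^ j * f * z, e ^ k * w⁆ = ⁅(e ^ j * f) * z, e ^ k * w⁆ by group]
      rw [commutator_mul_central (hc hz) (hc hw), ← commutatorElement_inv, case2]
      exact Subgroup.inv_mem _ (Subgroup.zpow_mem _ (Subgroup.mem_zpowers c) _)
    · rw [show ⁅e ^ j * f * z, e ^ k * f * w⁆ = ⁅(e ^ j * f) * z, (e ^ k * f) * w⁆ by group]
      rw [commutator_mul_central (hc hz) (hc hw), case4]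
      exact Subgroup.zpow_mem _ (Subgroup.mem_zpowers c) _
  -- conclusion
  rintro u ⟨hu1, hu2⟩
  obtain ⟨k, hk⟩ := Subgroup.mem_zpowers_iff.mp (hC hu2)
  have hu1' : π u = 1 := hu1
  rw [← hk, map_zpow, hcdef, map_mul, map_zpow, he,
    MonoidHom.mem_ker.mp hz₃ker, mul_one, ← zpow_mul, hazpow] at hu1'
  rw [QuaternionGroup.one_def] at hu1'
  have hcast : (((-2 : ℤ) * k : ℤ) : ZMod (2 * m)) = 0 := by
    injection hu1'
  have hdvd : ((2 * m : ℕ) : ℤ) ∣ (-2 : ℤ) * k := (ZMod.intCast_zmod_eq_zero_iff_dvd _ _).mp hcast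
  obtain ⟨t, ht⟩ := hdvd
  have hk' : k = (m : ℤ) * (-t) := by
    have h2 : (2 : ℤ) * k = 2 * ((m : ℤ) * (-t)) := by push_cast at ht; linarith
    exact mul_left_cancel₀ two_ne_zero h2
  rw [Subgroup.mem_bot, ← hk, hk', zpow_mul, hcm, one_zpow]

end SchurQuatAux

/-- For every `n ≥ 1`, the generalized quaternion group `Q(n)`
(`QuaternionGroup (2^n)` in Mathlib) has trivial Schur multiplier `H₂(Q(n), ℤ)`.

Since group homology is not available, we state this via Hopf's formula: for a group `G` with a
free presentation `G ≅ F/R` (here `F = FreeGroup α` and `R = ker φ` for a surjection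
`φ : F → G`), the Schur multiplier is `H₂(G, ℤ) ≅ (R ∩ [F, F]) / [R, F]`; it is trivial iff
`R ∩ [F, F] ≤ [R, F]` (the reverse inclusion always holds). -/
theorem schur_multiplier_quaternion_trivial (n : ℕ) (hn : 1 ≤ n) :
    ∀ (α : Type) (φ : FreeGroup α →* QuaternionGroup (2 ^ n)),
      Function.Surjective φ →
        φ.ker ⊓ commutator (FreeGroup α) ≤ ⁅φ.ker, (⊤ : Subgroup (FreeGroup α))⁆ := by
  intro α φ hφ
  haveI : NeZero (2 ^ n) := ⟨pow_ne_zero n two_ne_zero⟩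
  set K : Subgroup (FreeGroup α) := ⁅φ.ker, (⊤ : Subgroup (FreeGroup α))⁆ with hK
  haveI hKnormal : K.Normal := Subgroup.commutator_normal _ _
  have hKle : K ≤ φ.ker := Subgroup.commutator_le_left _ _
  let π : FreeGroup α ⧸ K →* QuaternionGroup (2 ^ n) :=
    QuotientGroup.lift K φ fun g hg => MonoidHom.mem_ker.mp (hKle hg)
  have hπmk : ∀ g : FreeGroup α, π (QuotientGroup.mk g) = φ g := fun g => rfl
  have hs : Function.Surjective π := by
    intro q
    obtain ⟨g, hg⟩ := hφ q
    exact ⟨QuotientGroup.mk g, by rw [hπmk, hg]⟩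
  have hc : π.ker ≤ Subgroup.center (FreeGroup α ⧸ K) := by
    intro x hx
    induction x using QuotientGroup.induction_on with
    | H g =>
      rw [Subgroup.mem_center_iff]
      intro y
      induction y using QuotientGroup.induction_on with
      | H h =>
        have hg : g ∈ φ.ker := by
          rw [MonoidHom.mem_ker, ← hπmk]
          exact hx
        rw [← QuotientGroup.mk_mul, ← QuotientGroup.mk_mul]
        rw [QuotientGroup.eq]
        have : (h * g)⁻¹ * (g * h) = ⁅g⁻¹, h⁻¹⁆ := by
          rw [commutatorElement_def]; group
        rw [this]
        exact Subgroup.commutator_mem_commutator (Subgroup.inv_mem _ hg) (Subgroup.mem_top _)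
  rintro w ⟨hw1, hw2⟩
  have hmem : (QuotientGroup.mk w : FreeGroup α ⧸ K) ∈ π.ker ⊓ commutator (FreeGroup α ⧸ K) := by
    constructor
    · exact (show φ w = 1 from hw1)
    · have : (QuotientGroup.mk w : FreeGroup α ⧸ K) ∈
          Subgroup.map (QuotientGroup.mk' K) (commutator (FreeGroup α)) :=
        ⟨w, hw2, rfl⟩
      rw [commutator_def, Subgroup.map_commutator] at this
      exact Subgroup.commutator_mono le_top le_top this
  have := SchurQuatAux.core (2 ^ n) π hs hc hmem
  rw [Subgroup.mem_bot] at this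
  rwa [← QuotientGroup.eq_one_iff w]
end

section
/- For every n ≥ 1, the generalized quaternion group Q(n) is a leaf on the descendant tree of 2-groups: there is no finite 2-group D whose lower exponent-2 central series satisfies D_{n+2} = {e}, D_{n+1} ≠ {e}, and D/D_{n+1} ≅ Q(n). -/
open Subgroup QuaternionGroup
open scoped commutatorElement

lemma lep_succ (p : ℕ) (G : Type*) [Group G] (j : ℕ) :
    lowerExpPSeries p G (j+1) =
      Subgroup.closure {x : G | ∃ g ∈ lowerExpPSeries p G j, x = g ^ p} ⊔
      ⁅lowerExpPSeries p G j, (⊤ : Subgroup G)⁆ := rfl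

lemma sq_mem_lep {p : ℕ} {G : Type*} [Group G] {j : ℕ} {g : G}
    (hg : g ∈ lowerExpPSeries p G j) : g ^ p ∈ lowerExpPSeries p G (j+1) := by
  rw [lep_succ]
  exact le_sup_left (α := Subgroup G) (subset_closure ⟨g, hg, rfl⟩)

lemma comm_mem_lep {p : ℕ} {G : Type*} [Group G] {j : ℕ} {g : G}
    (hg : g ∈ lowerExpPSeries p G j) (d : G) : ⁅g, d⁆ ∈ lowerExpPSeries p G (j+1) := by
  rw [lep_succ]
  exact le_sup_right (α := Subgroup G) (commutator_mem_commutator hg (mem_top d))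

lemma pow_mem_lep (p : ℕ) {G : Type*} [Group G] (g : G) :
    ∀ j, g ^ p ^ j ∈ lowerExpPSeries p G j
  | 0 => mem_top _
  | j+1 => by rw [pow_succ, pow_mul]; exact sq_mem_lep (pow_mem_lep p g j)

lemma map_lep_le {G H : Type*} [Group G] [Group H] (φ : G →* H) (p : ℕ) :
    ∀ j, Subgroup.map φ (lowerExpPSeries p G j) ≤ lowerExpPSeries p H j
  | 0 => le_top
  | j+1 => by
    rw [lep_succ, lep_succ, Subgroup.map_sup, Subgroup.map_commutator]
    apply sup_le_sup
    · rw [MonoidHom.map_closure]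
      apply Subgroup.closure_mono
      rintro x ⟨y, ⟨g, hg, rfl⟩, rfl⟩
      exact ⟨φ g, map_lep_le φ p j ⟨g, hg, rfl⟩, map_pow φ g p⟩
    · exact Subgroup.commutator_mono (map_lep_le φ p j) le_top

section Quat

lemma q_inv_a {m : ℕ} (i : ZMod (2*m)) : (a i : QuaternionGroup m)⁻¹ = a (-i) := rfl

lemma q_inv_xa {m : ℕ} (i : ZMod (2*m)) : (xa i : QuaternionGroup m)⁻¹ = xa ((m : ZMod (2*m)) + i) := rfl

lemma q_a_pow {m : ℕ} (r : ZMod (2*m)) (k : ℕ) :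
    (a r : QuaternionGroup m) ^ k = a ((k : ZMod (2*m)) * r) := by
  induction k with
  | zero => rw [pow_zero, one_def, Nat.cast_zero, zero_mul]
  | succ k ih => rw [pow_succ, ih, a_mul_a]; congr 1; push_cast; ring

lemma q_a_zpow {m : ℕ} (r : ZMod (2*m)) (k : ℤ) :
    (a r : QuaternionGroup m) ^ k = a ((k : ZMod (2*m)) * r) := by
  cases k with
  | ofNat k =>
      rw [Int.ofNat_eq_natCast, zpow_natCast, q_a_pow]
      congr 1; push_cast; ring
  | negSucc k =>
      rw [zpow_negSucc, q_a_pow, q_inv_a]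
      congr 1
      have : ((Int.negSucc k : ℤ) : ZMod (2*m)) = -((k+1 : ℕ) : ZMod (2*m)) := by
        rw [Int.negSucc_eq]; push_cast; ring
      rw [this]; push_cast; ring

lemma q_a_double_mem {m : ℕ} [NeZero m] (i : ZMod (2*m)) :
    (a (i + i) : QuaternionGroup m) ∈ Subgroup.zpowers (a 2) := by
  haveI : NeZero (2*m) := ⟨by have := NeZero.ne m; omega⟩
  refine Subgroup.mem_zpowers_iff.mpr ⟨(i.val : ℤ), ?_⟩
  rw [q_a_zpow]
  congr 1
  push_cast [ZMod.natCast_val, ZMod.cast_id]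
  ring

lemma quat_closure (m : ℕ) [NeZero m] :
    Subgroup.closure ({a 1, xa 0} : Set (QuaternionGroup m)) = ⊤ := by
  haveI : NeZero (2*m) := ⟨by have := NeZero.ne m; omega⟩
  rw [eq_top_iff']
  intro q
  have ha : ∀ i : ZMod (2*m), a i ∈ Subgroup.closure ({a 1, xa 0} : Set (QuaternionGroup m)) := by
    intro i
    have h1 : (a 1 : QuaternionGroup m) ^ (i.val) = a i := by
      rw [a_one_pow]
      congr 1
      simp [ZMod.natCast_val, ZMod.cast_id]
    rw [← h1]
    exact Subgroup.pow_mem _ (Subgroup.subset_closure (Set.mem_insert _ _)) _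
  cases q with
  | a i => exact ha i
  | xa i =>
      have h2 : (a (-i) : QuaternionGroup m) * xa 0 = xa i := by
        rw [a_mul_xa]; congr 1; ring
      rw [← h2]
      exact Subgroup.mul_mem _ (ha (-i)) (Subgroup.subset_closure (Set.mem_insert_of_mem _ rfl))

end Quat

lemma q_xa_conj_a {m : ℕ} (i j : ZMod (2*m)) :
    (xa j : QuaternionGroup m)⁻¹ * a i * xa j = a (-i) := by
  rw [q_inv_xa, xa_mul_a, xa_mul_xa]
  congr 1; ring

lemma q_cast_self {m : ℕ} : ((m : ℕ) : ZMod (2*m)) * 2 = 0 := by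
  have h := ZMod.natCast_self (2*m)
  push_cast at h
  linear_combination h

lemma q_conj_a_zpow {m : ℕ} (r j : ZMod (2*m)) (k : ℤ) :
    (xa j : QuaternionGroup m) * (a r)^k * (xa j)⁻¹ = (a r)^(-k) := by
  rw [q_a_zpow, q_a_zpow, q_inv_xa, xa_mul_a, xa_mul_xa]
  congr 1
  push_cast
  linear_combination (q_cast_self (m := m))

lemma quat_lep_le (n : ℕ) (hn : 1 ≤ n) :
    ∀ j, lowerExpPSeries 2 (QuaternionGroup (2^n)) (j+1) ≤
      Subgroup.zpowers (a ((2^(j+1) : ℕ) : ZMod (2 * 2^n))) := by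
  haveI : NeZero (2^n) := ⟨by positivity⟩
  have hm0 : ((2^n : ℕ) : ZMod (2 * 2^n)) * 2 = 0 := q_cast_self
  intro j
  induction j with
  | zero =>
      have h2 : ((2^(0+1) : ℕ) : ZMod (2 * 2^n)) = 2 := by norm_num
      rw [lep_succ, h2]
      apply sup_le
      · rw [Subgroup.closure_le]
        rintro x ⟨g, -, rfl⟩
        cases g with
        | a i =>
            have : (a i : QuaternionGroup (2^n)) ^ 2 = a (i + i) := by
              rw [sq, a_mul_a]
            rw [this]
            exact q_a_double_mem i
        | xa i =>
            rw [xa_sq]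
            have hsplit : ((2^n : ℕ) : ZMod (2 * 2^n)) =
                ((2^(n-1) : ℕ) : ZMod (2 * 2^n)) + ((2^(n-1) : ℕ) : ZMod (2 * 2^n)) := by
              have hnat : (2^n : ℕ) = 2^(n-1) + 2^(n-1) := by
                conv_lhs => rw [show n = (n-1)+1 by omega]
                rw [pow_succ, mul_two]
              rw [hnat]; push_cast; ring
            rw [hsplit]
            exact q_a_double_mem _
      · rw [Subgroup.commutator_le]
        intro g _ h _
        cases g with
        | a i =>
            cases h with
            | a j =>
                have : ⁅(a i : QuaternionGroup (2^n)), a j⁆ = a (0 + 0) := by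
                  simp only [commutatorElement_def, q_inv_a, a_mul_a]
                  congr 1; ring
                rw [this]; exact q_a_double_mem 0
            | xa j =>
                have : ⁅(a i : QuaternionGroup (2^n)), xa j⁆ = a (i + i) := by
                  simp only [commutatorElement_def, q_inv_a, q_inv_xa, a_mul_xa, xa_mul_a,
                    xa_mul_xa, a_mul_a]
                  congr 1; linear_combination hm0
                rw [this]; exact q_a_double_mem _
        | xa i =>
            cases h with
            | a j =>
                have : ⁅(xa i : QuaternionGroup (2^n)), a j⁆ = a (-j + -j) := by
                  simp only [commutatorElement_def, q_inv_a, q_inv_xa, a_mul_xa, xa_mul_a,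
                    xa_mul_xa, a_mul_a]
                  congr 1; linear_combination hm0
                rw [this]; exact q_a_double_mem _
            | xa j =>
                have : ⁅(xa i : QuaternionGroup (2^n)), xa j⁆ =
                    a ((j - i) + (j - i)) := by
                  simp only [commutatorElement_def, q_inv_a, q_inv_xa, a_mul_xa, xa_mul_a,
                    xa_mul_xa, a_mul_a]
                  congr 1; linear_combination hm0
                rw [this]; exact q_a_double_mem _
  | succ j ih =>
      have hcc : ((2^(j+1+1) : ℕ) : ZMod (2 * 2^n)) =
          ((2^(j+1) : ℕ) : ZMod (2 * 2^n)) + ((2^(j+1) : ℕ) : ZMod (2 * 2^n)) := by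
        push_cast; ring
      set c : ZMod (2 * 2^n) := ((2^(j+1) : ℕ) : ZMod (2 * 2^n)) with hc
      rw [lep_succ]
      apply sup_le
      · rw [Subgroup.closure_le]
        rintro x ⟨g, hg, rfl⟩
        obtain ⟨k, hk⟩ := Subgroup.mem_zpowers_iff.mp (ih hg)
        rw [← hk, ← zpow_natCast, ← zpow_mul]
        refine Subgroup.mem_zpowers_iff.mpr ⟨k, ?_⟩
        rw [q_a_zpow, q_a_zpow, hcc]
        congr 1; push_cast; ring
      · rw [Subgroup.commutator_le]
        intro g hg h _
        obtain ⟨k, hk⟩ := Subgroup.mem_zpowers_iff.mp (ih hg)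
        cases h with
        | a i =>
            have hcomm : Commute g (a i : QuaternionGroup (2^n)) := by
              rw [← hk]
              apply Commute.zpow_left
              show _ = _
              rw [a_mul_a, a_mul_a, add_comm]
            rw [hcomm.commutator_eq]
            exact Subgroup.one_mem _
        | xa i =>
            rw [commutatorElement_def, ← hk, ← zpow_neg]
            have key : (a c : QuaternionGroup (2^n))^k * xa i * (a c)^(-k) * (xa i)⁻¹ =
                (a c)^k * (xa i * (a c)^(-k) * (xa i)⁻¹) := by group
            rw [key, q_conj_a_zpow, neg_neg, ← zpow_add]
            refine Subgroup.mem_zpowers_iff.mpr ⟨k, ?_⟩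
            rw [q_a_zpow, q_a_zpow, hcc]
            congr 1; push_cast; ring

/-- For every `n ≥ 1`, the generalized quaternion group `Q(n)`
(`QuaternionGroup (2^n)` in Mathlib) is a leaf on the descendant tree of `2`-groups: there is no
finite `2`-group `D` of `2`-class `n+2` with `D/D_{n+1} ≅ Q(n)`, where `D_j` denotes the lower
exponent-`2` central series (the quotient `D/D_{n+1}` is encoded by a surjective homomorphism
with kernel `D_{n+1}`). -/
theorem quaternion_is_leaf (n : ℕ) (hn : 1 ≤ n) :
    ∀ (D : Type) [Group D] [Finite D], IsPGroup 2 D →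
      lowerExpPSeries 2 D (n + 2) = ⊥ →
      lowerExpPSeries 2 D (n + 1) ≠ ⊥ →
      ∀ φ : D →* QuaternionGroup (2 ^ n),
        Function.Surjective φ → φ.ker ≠ lowerExpPSeries 2 D (n + 1) := by
  intro D _ _ _hp htop hne φ hsurj hker
  apply hne
  -- elements of the kernel are central and have order dividing 2
  have hker' : ∀ w : D, w ∈ φ.ker → w ∈ lowerExpPSeries 2 D (n+1) := fun w hw => hker ▸ hw
  have hcen : ∀ w ∈ φ.ker, ∀ d : D, Commute w d := by
    intro w hw d
    have h1 : ⁅w, d⁆ ∈ lowerExpPSeries 2 D (n+2) := comm_mem_lep (hker' w hw) d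
    rw [htop, Subgroup.mem_bot] at h1
    exact commutatorElement_eq_one_iff_commute.mp h1
  have hsq1 : ∀ w ∈ φ.ker, w^2 = 1 := by
    intro w hw
    have h1 : w^2 ∈ lowerExpPSeries 2 D (n+2) := sq_mem_lep (hker' w hw)
    rwa [htop, Subgroup.mem_bot] at h1
  obtain ⟨a0, ha0⟩ := hsurj (a 1)
  obtain ⟨b, hb⟩ := hsurj (xa 0)
  set t : D := a0 ^ (2^n) with htdef
  have hφt : φ t = a ((2^n : ℕ) : ZMod (2 * 2^n)) := by
    rw [htdef, map_pow, ha0, a_one_pow]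
  -- the lifted relation y⁻¹ x y = x⁻¹
  have hu : b⁻¹ * a0 * b * a0 ∈ φ.ker := by
    rw [MonoidHom.mem_ker]
    simp only [map_mul, map_inv, ha0, hb, q_inv_xa, xa_mul_a, xa_mul_xa, a_mul_a]
    rw [one_def]
    congr 1; ring
  set u : D := b⁻¹ * a0 * b * a0 with hudef
  have hbab : b⁻¹ * a0 * b = u * a0⁻¹ := by rw [hudef]; group
  have hconj : b⁻¹ * t * b = t⁻¹ := by
    have h1 : b⁻¹ * t * b = (b⁻¹ * a0 * b)^(2^n) := by
      have h2 := conj_pow (i := 2^n) (a := b⁻¹) (b := a0)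
      rw [inv_inv] at h2
      rw [htdef, ← h2]
    rw [h1, hbab, (hcen u hu a0⁻¹).mul_pow]
    have h3 : u ^ (2^n) = 1 := by
      have h4 : 2^n = 2 * 2^(n-1) := by
        conv_lhs => rw [show n = (n-1)+1 by omega]
        rw [pow_succ]; ring
      rw [h4, pow_mul, hsq1 u hu, one_pow]
    rw [h3, one_mul, inv_pow]
  -- the lifted relation y² = x^{2^n}
  have hv : b^2 * t⁻¹ ∈ φ.ker := by
    rw [MonoidHom.mem_ker, map_mul, map_inv, map_pow, hb, hφt, xa_sq, mul_inv_cancel]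
  have ht2 : t^2 = 1 := by
    set v : D := b^2 * t⁻¹ with hvdef
    have hb2 : b^2 = v * t := by rw [hvdef]; group
    have h3 : b⁻¹ * (v * t) * b = v * t := by rw [← hb2]; group
    have h4 : b⁻¹ * (v * t) * b = v * (b⁻¹ * t * b) := by
      have h5 : b⁻¹ * v = v * b⁻¹ := ((hcen v hv b⁻¹)).symm
      calc b⁻¹ * (v * t) * b = (b⁻¹ * v) * (t * b) := by group
        _ = (v * b⁻¹) * (t * b) := by rw [h5]
        _ = v * (b⁻¹ * t * b) := by group
    have h6 : v * t = v * t⁻¹ := by rw [← h3, h4, hconj]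
    have h7 : t = t⁻¹ := mul_left_cancel h6
    rw [pow_two]
    nth_rewrite 2 [h7]
    exact mul_inv_cancel t
  have htinv : t⁻¹ = t := by
    rw [← mul_left_cancel_iff (a := t), mul_inv_cancel, ← pow_two, ht2]
  -- t is central
  have htc : ∀ d : D, Commute t d := by
    have hgen : Subgroup.closure ({a0, b} : Set D) ⊔ φ.ker = ⊤ := by
      have h1 : Subgroup.map φ (Subgroup.closure {a0, b}) = ⊤ := by
        rw [MonoidHom.map_closure, Set.image_pair, ha0, hb]
        haveI : NeZero (2^n) := ⟨by positivity⟩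
        exact quat_closure (2^n)
      rw [← Subgroup.comap_map_eq φ (Subgroup.closure {a0, b}), h1, Subgroup.comap_top]
    have hle : Subgroup.closure ({a0, b} : Set D) ⊔ φ.ker ≤ Subgroup.centralizer {t} := by
      apply sup_le
      · rw [Subgroup.closure_le]
        rintro x (rfl | rfl)
        · rw [SetLike.mem_coe, Subgroup.mem_centralizer_singleton_iff]
          rw [htdef]
          exact ((Commute.refl x).pow_left (2^n)).symm.eq
        · rw [SetLike.mem_coe, Subgroup.mem_centralizer_singleton_iff]
          have h8 : x * (x⁻¹ * t * x) = t * x := by group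
          rw [hconj, htinv] at h8
          exact h8
      · intro w hw
        rw [Subgroup.mem_centralizer_singleton_iff]
        exact (hcen w hw t).eq
    intro d
    have hd : d ∈ Subgroup.centralizer {t} := hle (hgen ▸ Subgroup.mem_top d)
    rw [Subgroup.mem_centralizer_singleton_iff] at hd
    exact hd.symm
  -- every element of D_n is central of order dividing 2
  have hDn : ∀ g ∈ lowerExpPSeries 2 D n, (∀ d : D, Commute g d) ∧ g^2 = 1 := by
    intro g hg
    have h1 : φ g ∈ Subgroup.zpowers (a ((2^n : ℕ) : ZMod (2 * 2^n))) := by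
      obtain ⟨n', rfl⟩ : ∃ n', n = n' + 1 := ⟨n - 1, by omega⟩
      exact quat_lep_le _ hn n' (map_lep_le φ 2 (n'+1) (Subgroup.mem_map.mpr ⟨g, hg, rfl⟩))
    rw [← hφt] at h1
    obtain ⟨k, hk⟩ := Subgroup.mem_zpowers_iff.mp h1
    have hw : t^(-k) * g ∈ φ.ker := by
      rw [MonoidHom.mem_ker, map_mul, map_zpow, ← hk]
      group
    set w : D := t^(-k) * g with hwdef
    have hg' : g = t^k * w := by rw [hwdef]; group
    constructor
    · intro d
      rw [hg']
      exact ((htc d).zpow_left k).mul_left (hcen w hw d)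
    · rw [hg', ((htc w).zpow_left k).mul_pow, hsq1 w hw, mul_one,
        ← zpow_natCast, ← zpow_mul, mul_comm, zpow_mul, zpow_natCast, ht2, one_zpow]
  -- conclude: D_{n+1} = ⊥
  rw [eq_bot_iff, lep_succ]
  apply sup_le
  · rw [Subgroup.closure_le]
    rintro x ⟨g, hg, rfl⟩
    rw [SetLike.mem_coe, Subgroup.mem_bot]
    exact (hDn g hg).2
  · rw [Subgroup.commutator_le]
    intro g hg d _
    rw [((hDn g hg).1 d).commutator_eq]
    exact Subgroup.one_mem ⊥
end

section
/- For every n ≥ 1, the quotient map π : Q(n) → Q(n)/Z(Q(n)) is not a forcing extension: for every conjugacy class C of Q(n)/Z(Q(n)) there exist c ∈ C and g ∈ π^{-1}(c) such that the order of g differs from the order of c. -/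
namespace QuaternionAux

open QuaternionGroup

variable {N : ℕ}

lemma natCast_ne_zero (hN : 1 ≤ N) : (N : ZMod (2 * N)) ≠ 0 := by
  rw [Ne, ZMod.natCast_eq_zero_iff]
  intro h
  have := Nat.le_of_dvd (by omega) h
  omega

lemma mem_center_of_sq_eq_one (hN : 1 ≤ N) (g : QuaternionGroup N)
    (hg : g ^ 2 = 1) : g ∈ Subgroup.center (QuaternionGroup N) := by
  rw [Subgroup.mem_center_iff]
  rcases g with i | i
  · have hi : i + i = 0 := by
      have : a (i + i) = a 0 := by
        rw [sq, a_mul_a, one_def] at hg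
        exact hg
      exact QuaternionGroup.a.inj this
    rintro (j | j)
    · simp [add_comm]
    · simp only [xa_mul_a, a_mul_xa]
      congr 1
      have : i = -i := by linear_combination hi
      rw [sub_eq_add_neg, ← this]
  · exfalso
    rw [xa_sq, one_def] at hg
    exact natCast_ne_zero hN (QuaternionGroup.a.inj hg)

lemma z_mem_center (hN : 1 ≤ N) :
    (a (N : ZMod (2 * N)) : QuaternionGroup N) ∈ Subgroup.center (QuaternionGroup N) := by
  apply mem_center_of_sq_eq_one hN
  rw [sq, a_mul_a, one_def]
  congr 1
  have : ((2 * N : ℕ) : ZMod (2 * N)) = 0 := ZMod.natCast_self _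
  push_cast at this
  linear_combination this

lemma orderOf_z (hN : 1 ≤ N) :
    orderOf (a (N : ZMod (2 * N)) : QuaternionGroup N) = 2 := by
  have h2 : (a (N : ZMod (2 * N)) : QuaternionGroup N) ^ 2 = 1 := by
    rw [sq, a_mul_a, one_def]
    congr 1
    have : ((2 * N : ℕ) : ZMod (2 * N)) = 0 := ZMod.natCast_self _
    push_cast at this
    linear_combination this
  have hne : (a (N : ZMod (2 * N)) : QuaternionGroup N) ≠ 1 := by
    rw [one_def]
    intro h
    exact natCast_ne_zero hN (QuaternionGroup.a.inj h)
  exact orderOf_eq_prime h2 hne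

lemma key (hN : 1 ≤ N) [NeZero N]
    (c : QuaternionGroup N ⧸ Subgroup.center (QuaternionGroup N)) :
    ∃ g : QuaternionGroup N,
      QuotientGroup.mk' (Subgroup.center (QuaternionGroup N)) g = c ∧
        orderOf g ≠ orderOf c := by
  by_contra hcon
  push_neg at hcon
  obtain ⟨g₀, hg₀⟩ := QuotientGroup.mk'_surjective (Subgroup.center (QuaternionGroup N)) c
  set z : QuaternionGroup N := a (N : ZMod (2 * N)) with hz
  have hzc : z ∈ Subgroup.center (QuaternionGroup N) := z_mem_center hN
  have hmkz : QuotientGroup.mk' (Subgroup.center (QuaternionGroup N)) z = 1 :=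
    (QuotientGroup.eq_one_iff z).mpr hzc
  have hg₁ : QuotientGroup.mk' (Subgroup.center (QuaternionGroup N)) (g₀ * z) = c := by
    rw [map_mul, hmkz, mul_one, hg₀]
  set m := orderOf c with hm
  have h1 : orderOf g₀ = m := hcon g₀ hg₀
  have h2 : orderOf (g₀ * z) = m := hcon (g₀ * z) hg₁
  have hcomm : Commute g₀ z := Subgroup.mem_center_iff.mp hzc g₀
  have hp1 : g₀ ^ m = 1 := h1 ▸ pow_orderOf_eq_one g₀
  have hp2 : (g₀ * z) ^ m = 1 := h2 ▸ pow_orderOf_eq_one (g₀ * z)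
  have hzm : z ^ m = 1 := by
    have := hcomm.mul_pow m
    rw [this, hp1, one_mul] at hp2
    exact hp2
  have h2m : 2 ∣ m := by
    have := orderOf_dvd_of_pow_eq_one hzm
    rwa [orderOf_z hN] at this
  have hmpos : 0 < m := by
    have : 0 < Fintype.card (QuaternionGroup N) := Fintype.card_pos
    exact orderOf_pos c
  -- g₀ ^ (m / 2) squares to 1, hence is central, hence c ^ (m/2) = 1
  have hsq : (g₀ ^ (m / 2)) ^ 2 = 1 := by
    rw [← pow_mul]
    rw [Nat.div_mul_cancel h2m]
    exact hp1
  have hcent : g₀ ^ (m / 2) ∈ Subgroup.center (QuaternionGroup N) :=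
    mem_center_of_sq_eq_one hN _ hsq
  have hcpow : c ^ (m / 2) = 1 := by
    rw [← hg₀, ← map_pow]
    exact (QuotientGroup.eq_one_iff _).mpr hcent
  have hdvd : m ∣ m / 2 := orderOf_dvd_of_pow_eq_one hcpow
  have hhalf : 0 < m / 2 := Nat.div_pos (Nat.le_of_dvd hmpos h2m) two_pos
  have := Nat.le_of_dvd hhalf hdvd
  omega

end QuaternionAux

/-- For every `n ≥ 1`, the quotient map `π : Q(n) → Q(n)/Z(Q(n))` is not a
forcing extension: for every conjugacy class of `Q(n)/Z(Q(n))` there exist an element `c` of the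
class and a preimage `g ∈ π⁻¹(c)` whose order differs from that of `c`. -/
theorem quaternion_quotient_not_forcing (n : ℕ) (hn : 1 ≤ n) :
    ¬ IsForcingExtension
        (QuotientGroup.mk' (Subgroup.center (QuaternionGroup (2 ^ n)))) ∧
      ∀ c₀ : QuaternionGroup (2 ^ n) ⧸ Subgroup.center (QuaternionGroup (2 ^ n)),
        ∃ c, IsConj c₀ c ∧ ∃ g : QuaternionGroup (2 ^ n),
          QuotientGroup.mk' (Subgroup.center (QuaternionGroup (2 ^ n))) g = c ∧
            orderOf g ≠ orderOf c := by
  have hN : 1 ≤ 2 ^ n := Nat.one_le_two_pow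
  haveI : NeZero (2 ^ n) := ⟨by positivity⟩
  constructor
  · rintro ⟨-, c₀, h⟩
    obtain ⟨g, hg, hne⟩ := QuaternionAux.key hN c₀
    exact hne (h c₀ (IsConj.refl _) g hg)
  · intro c₀
    obtain ⟨g, hg, hne⟩ := QuaternionAux.key hN c₀
    exact ⟨c₀, IsConj.refl _, g, hg, hne⟩
end

section
/- Let L be a number field containing two subfields L₁ and L₂, with [L₁ : ℚ] = n and [L₂ : ℚ] = m, such that L is the compositum of L₁ and L₂ and [L : ℚ] = n·m (i.e., L₁ and L₂ are linearly disjoint over ℚ). Then Disc(L₁)^m · Disc(L₂)^n ≥ Disc(L), where Disc denotes the absolute value of the absolute discriminant. -/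
open NumberField Module Matrix
set_option maxHeartbeats 1000000
set_option synthInstance.maxHeartbeats 1000000

section Aux

lemma trace_tmul_aux (A B : Type*) [CommRing A] [CommRing B] [Algebra ℚ A] [Algebra ℚ B]
    [Module.Finite ℚ A] [Module.Finite ℚ B] (a : A) (b : B) :
    Algebra.trace ℚ (TensorProduct ℚ A B) (a ⊗ₜ b) =
      Algebra.trace ℚ A a * Algebra.trace ℚ B b := by
  have h : (Algebra.lmul ℚ (TensorProduct ℚ A B) (a ⊗ₜ b)) =
      TensorProduct.map (Algebra.lmul ℚ A a) (Algebra.lmul ℚ B b) := by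
    apply TensorProduct.ext'
    intro x y
    simp [Algebra.TensorProduct.tmul_mul_tmul]
  rw [Algebra.trace_apply, h, LinearMap.trace_tensorProduct', Algebra.trace_apply,
    Algebra.trace_apply]

end Aux

/-- If a number field `L` is the compositum of subfields `L₁`, `L₂` of degrees
`n`, `m` over `ℚ` with `[L : ℚ] = n·m` (linear disjointness), then
`Disc(L₁)^m · Disc(L₂)^n ≥ Disc(L)` (absolute values of discriminants). -/
theorem discr_compositum_bound (L : Type) [Field L] [NumberField L]
    (L₁ L₂ : IntermediateField ℚ L) (n m : ℕ)
    (hn : Module.finrank ℚ L₁ = n) (hm : Module.finrank ℚ L₂ = m)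
    (hcomp : L₁ ⊔ L₂ = ⊤) (hdeg : Module.finrank ℚ L = n * m) :
    |discr L| ≤ |discr L₁| ^ m * |discr L₂| ^ n := by
  classical
  subst hn hm
  set n := finrank ℚ L₁
  set m := finrank ℚ L₂
  -- the tensor product and the multiplication map
  let T := TensorProduct ℚ L₁ L₂
  let g : T →ₐ[ℚ] L := Algebra.TensorProduct.productMap L₁.val L₂.val
  have hrange : g.range = ⊤ := by
    show (Algebra.TensorProduct.productMap L₁.val L₂.val).range = ⊤
    rw [Algebra.TensorProduct.productMap_range, L₁.range_val, L₂.range_val,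
      ← IntermediateField.sup_toSubalgebra_of_left, hcomp]
    rfl
  have hsurj : Function.Surjective g := by
    rw [← AlgHom.range_eq_top]; exact hrange
  have hfr : finrank ℚ T = finrank ℚ L := by
    rw [Module.finrank_tensorProduct, hdeg]
  have hinj : Function.Injective g :=
    (LinearMap.injective_iff_surjective_of_finrank_eq_finrank (f := g.toLinearMap) hfr).2 hsurj
  let E : T ≃ₐ[ℚ] L := AlgEquiv.ofBijective g ⟨hinj, hsurj⟩
  -- the tensor product basis
  let b₁ := integralBasis L₁
  let b₂ := integralBasis L₂
  let B := Basis.tensorProduct b₁ b₂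
  have hcard₁ : Fintype.card (Free.ChooseBasisIndex ℤ (𝓞 L₁)) = n :=
    (Module.finrank_eq_card_basis b₁).symm
  have hcard₂ : Fintype.card (Free.ChooseBasisIndex ℤ (𝓞 L₂)) = m :=
    (Module.finrank_eq_card_basis b₂).symm
  have hdiscB : Algebra.discr ℚ ⇑B = (discr L₁ : ℚ) ^ m * (discr L₂ : ℚ) ^ n := by
    have hmat : Algebra.traceMatrix ℚ ⇑B =
        Matrix.kroneckerMap (· * ·) (Algebra.traceMatrix ℚ ⇑b₁) (Algebra.traceMatrix ℚ ⇑b₂) := by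
      ext ⟨i, j⟩ ⟨k, l⟩
      simp only [Algebra.traceMatrix_apply, Algebra.traceForm_apply, Matrix.kroneckerMap_apply]
      rw [show B (i, j) = b₁ i ⊗ₜ b₂ j from Basis.tensorProduct_apply b₁ b₂ i j,
        show B (k, l) = b₁ k ⊗ₜ b₂ l from Basis.tensorProduct_apply b₁ b₂ k l,
        Algebra.TensorProduct.tmul_mul_tmul, trace_tmul_aux]
    rw [Algebra.discr_def, hmat, Matrix.det_kronecker, hcard₁, hcard₂,
      ← Algebra.discr_def, ← Algebra.discr_def, ← coe_discr, ← coe_discr]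
  -- transport to L
  let B' : Basis _ ℚ L := B.map E.toLinearEquiv
  have hB'coe : ⇑B' = ⇑E ∘ ⇑B := by
    funext i; simp [B', Basis.map_apply]
  have hdiscB' : Algebra.discr ℚ ⇑B' = (discr L₁ : ℚ) ^ m * (discr L₂ : ℚ) ^ n := by
    rw [hB'coe, ← Algebra.discr_eq_discr_of_algEquiv ⇑B E, hdiscB]
  -- each element of B' is integral
  have hint : ∀ i, IsIntegral ℤ (B' i) := by
    rintro ⟨i, j⟩
    rw [hB'coe]
    show IsIntegral ℤ (E (B (i, j)))
    rw [show B (i, j) = b₁ i ⊗ₜ b₂ j from Basis.tensorProduct_apply b₁ b₂ i j]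
    show IsIntegral ℤ (Algebra.TensorProduct.productMap L₁.val L₂.val (b₁ i ⊗ₜ b₂ j))
    rw [Algebra.TensorProduct.productMap_apply_tmul]
    have h1 : IsIntegral ℤ (b₁ i) := by
      rw [integralBasis_apply]
      exact RingOfIntegers.isIntegral_coe _
    have h2 : IsIntegral ℤ (b₂ j) := by
      rw [integralBasis_apply]
      exact RingOfIntegers.isIntegral_coe _
    exact (h1.algebraMap (B := L)).mul (h2.algebraMap (B := L))
  -- compare with the integral basis of L
  let eqv := (integralBasis L).indexEquiv B'
  let b₀ := (integralBasis L).reindex eqv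
  let P := b₀.toMatrix ⇑B'
  have hvec : ⇑B' = ⇑b₀ ᵥ* P.map (algebraMap ℚ L) := (b₀.toMatrix_map_vecMul ⇑B').symm
  have hdisc0 : Algebra.discr ℚ ⇑b₀ = (discr L : ℚ) := by
    rw [coe_discr]
    show Algebra.discr ℚ ⇑((integralBasis L).reindex eqv) = _
    rw [Basis.coe_reindex, Algebra.discr_reindex]
  have hkey : (discr L₁ : ℚ) ^ m * (discr L₂ : ℚ) ^ n = P.det ^ 2 * (discr L : ℚ) := by
    rw [← hdiscB', hvec, Algebra.discr_of_matrix_vecMul, hdisc0]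
  -- P has integral entries
  have hPint : ∀ i j, IsIntegral ℤ (P i j) := by
    intro i j
    have hx : algebraMap (𝓞 L) L (⟨B' j, (mem_integralClosure_iff ℤ L).mpr (hint j)⟩ : 𝓞 L) = B' j := rfl
    show IsIntegral ℤ (b₀.repr (B' j) i)
    rw [← hx]
    show IsIntegral ℤ (((integralBasis L).reindex eqv).repr _ i)
    erw [Basis.repr_reindex_apply, integralBasis_repr_apply]
    exact isIntegral_algebraMap
  obtain ⟨r, hr⟩ := IsIntegrallyClosed.isIntegral_iff.1 (IsIntegral.det fun i j => hPint i j)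
  have hr' : (r : ℚ) = P.det := hr
  have hrne : r ≠ 0 := by
    intro h0
    have h1 : ((discr L₁ : ℚ)) ≠ 0 := Int.cast_ne_zero.2 (discr_ne_zero L₁)
    have h2 : ((discr L₂ : ℚ)) ≠ 0 := Int.cast_ne_zero.2 (discr_ne_zero L₂)
    have hne := mul_ne_zero (pow_ne_zero m h1) (pow_ne_zero n h2)
    rw [hkey, ← hr', h0] at hne
    simp at hne
  -- descend to ℤ
  have hZ : discr L₁ ^ m * discr L₂ ^ n = r ^ 2 * discr L := by
    have := hkey
    rw [← hr'] at this
    exact_mod_cast this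
  have hr2 : 1 ≤ r ^ 2 := by
    have := Int.one_le_abs hrne
    nlinarith [sq_abs r]
  calc |discr L| = 1 * |discr L| := (one_mul _).symm
    _ ≤ r ^ 2 * |discr L| := by
        have : (0:ℤ) ≤ |discr L| := abs_nonneg _
        exact mul_le_mul_of_nonneg_right hr2 this
    _ = |r ^ 2 * discr L| := by
        rw [abs_mul, abs_of_nonneg (sq_nonneg r)]
    _ = |discr L₁ ^ m * discr L₂ ^ n| := by rw [← hZ]
    _ = |discr L₁| ^ m * |discr L₂| ^ n := by rw [abs_mul, abs_pow, abs_pow]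
end
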